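/- arXiv:2003.10954 — 5 statements merged into one kernel-verified Lean document; each statement's English description precedes it below -/
import Mathlib

section
/- If 2 a20 + b11 = 0 and a21 + b12 = 0, then there exists a polynomial function H : ℝ² → ℝ such that ∂H/∂y (x,y) = y + a20(x^2-1) + a21 x^2 y + a01 y + a02 y^2 + a03 y^3 and ∂H/∂x (x,y) = -(x - x^3 + b30(x^3-x) + b11 x y + b12 x y^2) for all (x,y); consequently H is a first integral of X, i.e. the inner product of the gradient of H with X vanishes identically. -/
private lemma poly_deriv (c1 c2 c3 c4 c5 t : ℝ) :
    HasDerivAt (fun s : ℝ => c1*s + c2*s^2 + c3*s^3 + c4*s^4 + c5)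
      (c1 + 2*c2*t + 3*c3*t^2 + 4*c4*t^3) t := by
  have h := ((((hasDerivAt_id t).const_mul c1).add
      (((hasDerivAt_pow 2 t).const_mul c2))).add
      (((hasDerivAt_pow 3 t).const_mul c3))).add
      (((hasDerivAt_pow 4 t).const_mul c4))
  have h' := h.add_const c5
  refine HasDerivAt.congr_deriv h' ?_
  push_cast
  ring

/-- If `2 a20 + b11 = 0` and `a21 + b12 = 0`, then there exists a polynomial function
`H : ℝ² → ℝ` with `∂H/∂y = P`, `∂H/∂x = -Q`; consequently `H` is a first integral of
the vector field `X = (P, Q)`, i.e. `∇H · X ≡ 0`. -/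
theorem hamiltonian_first_integral (a20 a21 a01 a02 a03 b30 b11 b12 : ℝ)
    (h1 : 2*a20 + b11 = 0) (h2 : a21 + b12 = 0) :
    ∃ H : ℝ → ℝ → ℝ,
      (∃ p : MvPolynomial (Fin 2) ℝ, ∀ x y : ℝ, H x y = MvPolynomial.eval ![x, y] p) ∧
      (∀ x y : ℝ, deriv (fun y' => H x y') y
          = y + a20*(x^2-1) + a21*x^2*y + a01*y + a02*y^2 + a03*y^3) ∧
      (∀ x y : ℝ, deriv (fun x' => H x' y) x
          = -(x - x^3 + b30*(x^3-x) + b11*x*y + b12*x*y^2)) ∧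
      (∀ x y : ℝ,
        deriv (fun x' => H x' y) x *
            (y + a20*(x^2-1) + a21*x^2*y + a01*y + a02*y^2 + a03*y^3)
          + deriv (fun y' => H x y') y *
            (x - x^3 + b30*(x^3-x) + b11*x*y + b12*x*y^2) = 0) := by
  have hb11 : b11 = -(2*a20) := by linarith
  have hb12 : b12 = -a21 := by linarith
  refine ⟨fun x y => (1/2 + a01/2)*y^2 + a20*(x^2-1)*y + a21/2*x^2*y^2
      + a02/3*y^3 + a03/4*y^4 - (1/2 - b30/2)*x^2 + (1/4 - b30/4)*x^4, ?_, ?_, ?_, ?_⟩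
  · refine ⟨(MvPolynomial.C (1/2 + a01/2))*(MvPolynomial.X 1)^2
      + (MvPolynomial.C a20)*((MvPolynomial.X 0)^2 - 1)*(MvPolynomial.X 1)
      + (MvPolynomial.C (a21/2))*(MvPolynomial.X 0)^2*(MvPolynomial.X 1)^2
      + (MvPolynomial.C (a02/3))*(MvPolynomial.X 1)^3
      + (MvPolynomial.C (a03/4))*(MvPolynomial.X 1)^4
      - (MvPolynomial.C (1/2 - b30/2))*(MvPolynomial.X 0)^2
      + (MvPolynomial.C (1/4 - b30/4))*(MvPolynomial.X 0)^4, fun x y => ?_⟩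
    simp
  · intro x y
    have heq : (fun y' : ℝ => (1/2 + a01/2)*y'^2 + a20*(x^2-1)*y' + a21/2*x^2*y'^2
        + a02/3*y'^3 + a03/4*y'^4 - (1/2 - b30/2)*x^2 + (1/4 - b30/4)*x^4)
        = fun s : ℝ => (a20*(x^2-1))*s + (1/2 + a01/2 + a21/2*x^2)*s^2 + (a02/3)*s^3
          + (a03/4)*s^4 + (-(1/2 - b30/2)*x^2 + (1/4 - b30/4)*x^4) := by
      funext s; ring
    rw [heq, (poly_deriv _ _ _ _ _ y).deriv]
    ring
  · intro x y
    have heq : (fun x' : ℝ => (1/2 + a01/2)*y^2 + a20*(x'^2-1)*y + a21/2*x'^2*y^2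
        + a02/3*y^3 + a03/4*y^4 - (1/2 - b30/2)*x'^2 + (1/4 - b30/4)*x'^4)
        = fun s : ℝ => (0:ℝ)*s + (a20*y + a21/2*y^2 - (1/2 - b30/2))*s^2 + (0:ℝ)*s^3
          + (1/4 - b30/4)*s^4 + ((1/2 + a01/2)*y^2 - a20*y + a02/3*y^3 + a03/4*y^4) := by
      funext s; ring
    rw [heq, (poly_deriv _ _ _ _ _ x).deriv]
    rw [hb11, hb12]; ring
  · intro x y
    have hdx : deriv (fun x' : ℝ => (1/2 + a01/2)*y^2 + a20*(x'^2-1)*y + a21/2*x'^2*y^2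
        + a02/3*y^3 + a03/4*y^4 - (1/2 - b30/2)*x'^2 + (1/4 - b30/4)*x'^4) x
        = -(x - x^3 + b30*(x^3-x) + b11*x*y + b12*x*y^2) := by
      have heq : (fun x' : ℝ => (1/2 + a01/2)*y^2 + a20*(x'^2-1)*y + a21/2*x'^2*y^2
          + a02/3*y^3 + a03/4*y^4 - (1/2 - b30/2)*x'^2 + (1/4 - b30/4)*x'^4)
          = fun s : ℝ => (0:ℝ)*s + (a20*y + a21/2*y^2 - (1/2 - b30/2))*s^2 + (0:ℝ)*s^3
            + (1/4 - b30/4)*s^4 + ((1/2 + a01/2)*y^2 - a20*y + a02/3*y^3 + a03/4*y^4) := by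
        funext s; ring
      rw [heq, (poly_deriv _ _ _ _ _ x).deriv, hb11, hb12]; ring
    have hdy : deriv (fun y' : ℝ => (1/2 + a01/2)*y'^2 + a20*(x^2-1)*y' + a21/2*x^2*y'^2
        + a02/3*y'^3 + a03/4*y'^4 - (1/2 - b30/2)*x^2 + (1/4 - b30/4)*x^4) y
        = y + a20*(x^2-1) + a21*x^2*y + a01*y + a02*y^2 + a03*y^3 := by
      have heq : (fun y' : ℝ => (1/2 + a01/2)*y'^2 + a20*(x^2-1)*y' + a21/2*x^2*y'^2
          + a02/3*y'^3 + a03/4*y'^4 - (1/2 - b30/2)*x^2 + (1/4 - b30/4)*x^4)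
          = fun s : ℝ => (a20*(x^2-1))*s + (1/2 + a01/2 + a21/2*x^2)*s^2 + (a02/3)*s^3
            + (a03/4)*s^4 + (-(1/2 - b30/2)*x^2 + (1/4 - b30/4)*x^4) := by
        funext s; ring
      rw [heq, (poly_deriv _ _ _ _ _ y).deriv]; ring
    rw [hdx, hdy]; ring
end

section
/- Assume b30 ≠ 1, 2 a20 + b11 = 0 and (1 - b30) a02 = a20 (2 a21 - b12). Put P₂(y) = (1/(b30-1))(b11 y + b12 y²), and define A = 2(1+a01+a21)/(1-b30) - 4 a20²/(1-b30)², B = 2 a03/(1-b30) + 2 a21 b12/(1-b30)², C = 2(a21 + b12)/(1-b30). Let Φ(x,y) = (y², x² - 1 + P₂(y)) (coordinates (v,u)). Then the 1-form of the cubic system X equals ((1-b30)/4) times the pullback under Φ of the 1-form (A + B v + C u) dv + 2 u du of the linear system v̇ = 2u, u̇ = -A - B v - C u. Componentwise, for all (x,y): ((1-b30)/4) · 2(x²-1+P₂(y)) · 2x = -(x - x^3 + b30(x^3-x) + b11 x y + b12 x y^2) and ((1-b30)/4) · [ (A + B y² + C(x²-1+P₂(y))) · 2y + 2(x²-1+P₂(y))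 P₂'(y) ] = y + a20(x^2-1) + a21 x^2 y + a01 y + a02 y^2 + a03 y^3. -/
/-- In the pull-back case (`2 a20 + b11 = 0`, `(1-b30) a02 = a20 (2 a21 - b12)`), the
1-form of the cubic system `X` equals `((1-b30)/4)` times the pullback under
`Φ(x,y) = (y², x² - 1 + P₂(y))` of the 1-form `(A + B v + C u) dv + 2 u du`
of the linear system `v̇ = 2u, u̇ = -A - B v - C u`; stated componentwise. -/
theorem cubic_pullback_of_linear (a20 a21 a01 a02 a03 b30 b11 b12 : ℝ)
    (hb : b30 ≠ 1) (h1 : 2*a20 + b11 = 0)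
    (h2 : (1-b30)*a02 = a20*(2*a21 - b12)) :
    let P2 : ℝ → ℝ := fun y => (1/(b30-1)) * (b11*y + b12*y^2)
    let A : ℝ := 2*(1+a01+a21)/(1-b30) - 4*a20^2/(1-b30)^2
    let B : ℝ := 2*a03/(1-b30) + 2*a21*b12/(1-b30)^2
    let C : ℝ := 2*(a21 + b12)/(1-b30)
    ∀ x y : ℝ,
      ((1-b30)/4) * (2*(x^2-1+P2 y)) * (2*x)
        = -(x - x^3 + b30*(x^3-x) + b11*x*y + b12*x*y^2) ∧
      ((1-b30)/4) * ((A + B*y^2 + C*(x^2-1+P2 y)) * (2*y)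
          + 2*(x^2-1+P2 y) * deriv P2 y)
        = y + a20*(x^2-1) + a21*x^2*y + a01*y + a02*y^2 + a03*y^3 := by
  intro P2 A B C x y
  have hb' : b30 - 1 ≠ 0 := sub_ne_zero.mpr hb
  have hb'' : (1 : ℝ) - b30 ≠ 0 := sub_ne_zero.mpr (Ne.symm hb)
  have hd : deriv P2 y = (1/(b30-1)) * (b11 + 2*b12*y) := by
    have : P2 = fun y => (1/(b30-1)) * (b11*y + b12*y^2) := rfl
    rw [this]
    have h : HasDerivAt (fun y : ℝ => (1/(b30-1)) * (b11*y + b12*y^2))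
        ((1/(b30-1)) * (b11 + 2*b12*y)) y := by
      have h1 : HasDerivAt (fun y : ℝ => b11*y + b12*y^2) (b11 + 2*b12*y) y := by
        have ha : HasDerivAt (fun y : ℝ => b11*y) b11 y :=
          (hasDerivAt_id y).const_mul b11 |>.congr_deriv (by ring)
        have hb2 : HasDerivAt (fun y : ℝ => b12*y^2) (2*b12*y) y := by
          have := ((hasDerivAt_pow 2 y).const_mul b12)
          simpa using this.congr_deriv (by push_cast; ring)
        exact ha.add hb2
      exact h1.const_mul _
    exact h.deriv
  constructor
  · simp only [P2]; field_simp; ring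
  · rw [hd]; simp only [P2, A, B, C]
    have h1' : b11 = -(2*a20) := by linarith
    have h2' : a02 = a20*(2*a21 - b12)/(1-b30) := by
      field_simp at h2 ⊢; linarith
    subst h1'; rw [h2']
    field_simp
    ring
end

section
/- If a₀ = b₁, c₁ - a₀ b₁ > 0 and a₁ = 2 b₂ (the Hamiltonian case), then the vector field Y has a center at the origin. -/
open Real intervalIntegral Filter Function Set

section aux

lemma scalarODE (g : ℝ → ℝ) (hgc : Continuous g) (m M : ℝ) (hm : 0 < m)
    (hg1 : ∀ x, m ≤ g x) (hg2 : ∀ x, g x ≤ M) (hper : Function.Periodic g (2*Real.pi))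
    (θ₀ : ℝ) :
    ∃ (θ : ℝ → ℝ) (L : ℝ), 0 < L ∧ θ 0 = θ₀ ∧ (∀ t, HasDerivAt θ (-(g (θ t))) t) ∧
      (∀ t, θ (t + L) = θ t - 2*Real.pi) ∧ Function.Surjective θ := by
  have hgpos : ∀ x, 0 < g x := fun x => lt_of_lt_of_le hm (hg1 x)
  have hMpos : 0 < M := lt_of_lt_of_le (hgpos 0) (hg2 0)
  have hic : Continuous fun x => (g x)⁻¹ := hgc.inv₀ fun x => (hgpos x).ne'
  set F : ℝ → ℝ := fun x => ∫ s in (0:ℝ)..x, (g s)⁻¹ with hFdef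
  have hF' : ∀ x, HasDerivAt F ((g x)⁻¹) x := fun x =>
    (hic.integral_hasStrictDerivAt 0 x).hasDerivAt
  have hFc : Continuous F := by
    have : Differentiable ℝ F := fun x => (hF' x).differentiableAt
    exact this.continuous
  have hFmono : StrictMono F := by
    apply strictMono_of_deriv_pos
    intro x
    rw [(hF' x).deriv]
    exact inv_pos.2 (hgpos x)
  -- lower bound `x / M ≤ F x` for `x ≥ 0`
  have hlow : ∀ x : ℝ, 0 ≤ x → x / M ≤ F x := by
    intro x hx
    have h1 : ∫ s in (0:ℝ)..x, M⁻¹ ≤ ∫ s in (0:ℝ)..x, (g s)⁻¹ := by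
      apply intervalIntegral.integral_mono_on hx
        (intervalIntegrable_const) (hic.intervalIntegrable 0 x)
      intro s _
      exact inv_anti₀ (hgpos s) (hg2 s)
    have h0 : (∫ s in (0:ℝ)..x, (M:ℝ)⁻¹) = (x - 0) * M⁻¹ := by
      simp [intervalIntegral.integral_const, smul_eq_mul]
    rw [h0] at h1
    rw [div_eq_mul_inv]
    linarith
  have hhigh : ∀ x : ℝ, x ≤ 0 → F x ≤ x / M := by
    intro x hx
    have h1 : ∫ s in x..(0:ℝ), M⁻¹ ≤ ∫ s in x..(0:ℝ), (g s)⁻¹ := by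
      apply intervalIntegral.integral_mono_on (by linarith)
        (intervalIntegrable_const) (hic.intervalIntegrable x 0)
      intro s _
      exact inv_anti₀ (hgpos s) (hg2 s)
    have h2 : F x = -∫ s in x..(0:ℝ), (g s)⁻¹ := by
      show (∫ s in (0:ℝ)..x, (g s)⁻¹) = -∫ s in x..(0:ℝ), (g s)⁻¹
      rw [intervalIntegral.integral_symm x 0]
    have h3 : (0 - x) * M⁻¹ ≤ ∫ s in x..(0:ℝ), (g s)⁻¹ := by
      have h0 : (∫ s in x..(0:ℝ), (M:ℝ)⁻¹) = (0 - x) * M⁻¹ := by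
        simp [intervalIntegral.integral_const, smul_eq_mul]
      rw [h0] at h1; exact h1
    rw [h2, div_eq_mul_inv]
    linarith
  have hFsurj : Function.Surjective F := by
    intro c
    set b : ℝ := M * (|c| + 1) with hb
    have hbpos : 0 ≤ b := by positivity
    have h1 : c ≤ F b := by
      have := hlow b hbpos
      have : |c| + 1 ≤ F b := by
        rw [hb] at this ⊢
        calc |c| + 1 = M * (|c|+1) / M := by field_simp
        _ ≤ F (M * (|c|+1)) := this
      linarith [le_abs_self c]
    have h2 : F (-b) ≤ c := by
      have := hhigh (-b) (by linarith)
      have h3 : (-b) / M = -(|c|+1) := by rw [hb]; field_simp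
      rw [h3] at this
      linarith [neg_abs_le c]
    have := intermediate_value_Icc (by linarith : (-b : ℝ) ≤ b) hFc.continuousOn
    obtain ⟨x, _, hx⟩ := this ⟨h2, h1⟩
    exact ⟨x, hx⟩
  set E := StrictMono.orderIsoOfSurjective F hFmono hFsurj with hE
  set Fi : ℝ → ℝ := fun x => E.symm x with hFi
  have hFiF : ∀ x, Fi (F x) = x := fun x =>
    StrictMono.orderIsoOfSurjective_symm_apply_self F hFmono hFsurj x
  have hFFi : ∀ x, F (Fi x) = x := fun x =>
    StrictMono.orderIsoOfSurjective_self_symm_apply F hFmono hFsurj x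
  have hFiC : Continuous Fi := OrderIso.continuous E.symm
  have hFi' : ∀ a, HasDerivAt Fi (g (Fi a)) a := by
    intro a
    have h := HasDerivAt.of_local_left_inverse hFiC.continuousAt
      (hF' (Fi a)) (inv_ne_zero (hgpos (Fi a)).ne') (Eventually.of_forall hFFi)
    simpa using h
  set θ : ℝ → ℝ := fun t => Fi (F θ₀ - t) with hθdef
  set L : ℝ := ∫ s in (0:ℝ)..(2*Real.pi), (g s)⁻¹ with hL
  have hLF : L = F (2*Real.pi) := rfl
  have hLpos : 0 < L := by
    have := hlow (2*Real.pi) (by positivity)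
    have h2 : 0 < 2*Real.pi / M := by positivity
    rw [hLF]; linarith
  have hperinv : Function.Periodic (fun x => (g x)⁻¹) (2*Real.pi) := fun x => by
    simp [hper x]
  have hshift : ∀ x : ℝ, F (x - 2*Real.pi) = F x - L := by
    intro x
    have hadd : (∫ s in (0:ℝ)..(x - 2*Real.pi), (g s)⁻¹)
        + ∫ s in (x - 2*Real.pi)..x, (g s)⁻¹ = ∫ s in (0:ℝ)..x, (g s)⁻¹ :=
      intervalIntegral.integral_add_adjacent_intervals
        (hic.intervalIntegrable _ _) (hic.intervalIntegrable _ _)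
    have hper2 : (∫ s in (x - 2*Real.pi)..x, (g s)⁻¹) = L := by
      have := hperinv.intervalIntegral_add_eq (x - 2*Real.pi) 0
      simpa [sub_add_cancel, zero_add] using this
    have : F (x - 2*Real.pi) + L = F x := by rw [← hper2]; exact hadd
    linarith
  refine ⟨θ, L, hLpos, ?_, ?_, ?_, ?_⟩
  · simp [hθdef, hFiF]
  · intro t
    have hinner : HasDerivAt (fun t : ℝ => F θ₀ - t) (-1) t := by
      simpa using (hasDerivAt_const t (F θ₀)).fun_sub (hasDerivAt_id t)
    have := (hFi' (F θ₀ - t)).comp t hinner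
    simpa [hθdef, mul_comm, Function.comp_def] using this
  · intro t
    have h1 : F (θ t - 2*Real.pi) = F θ₀ - (t + L) := by
      rw [hshift, hθdef]
      simp only []
      rw [hFFi]
      ring
    have : Fi (F (θ t - 2*Real.pi)) = Fi (F θ₀ - (t + L)) := by rw [h1]
    rw [hFiF] at this
    rw [hθdef]
    simp only []
    rw [← this]
  · intro x
    exact ⟨F θ₀ - F x, by simp [hθdef, hFiF]⟩

end aux

/-- A C¹ vector field `X` on `ℝ²` has a center at `p` if `X p = 0` and there is `ε > 0`
such that every point `z ≠ p` with `‖z - p‖ < ε` lies on a nonconstant periodic orbit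
through `z`: a nonconstant differentiable curve `γ : ℝ → ℝ²` and `T > 0` with `γ 0 = z`,
`γ' t = X (γ t)` for all `t`, and `γ T = z`. -/
def HasCenterAt (X : ℝ × ℝ → ℝ × ℝ) (p : ℝ × ℝ) : Prop :=
  X p = 0 ∧
  ∃ ε > 0, ∀ z : ℝ × ℝ, z ≠ p → ‖z - p‖ < ε →
    ∃ (γ : ℝ → ℝ × ℝ) (T : ℝ), 0 < T ∧ γ 0 = z ∧
      (∀ t : ℝ, HasDerivAt γ (X (γ t)) t) ∧ γ T = z ∧ (∃ t₁ t₂ : ℝ, γ t₁ ≠ γ t₂)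

/-- Hamiltonian case: if `a₀ = b₁`, `c₁ - a₀ b₁ > 0` and `a₁ = 2 b₂`, then the
Liénard-type vector field `Y` has a center at the origin. -/
theorem center_Hamiltonian_case (a0 a1 b1 b2 c1 c2 c3 : ℝ)
    (h1 : a0 = b1) (h2 : c1 - a0*b1 > 0) (h3 : a1 = 2*b2) :
    HasCenterAt (fun p : ℝ × ℝ =>
        ((c1*p.2 + c2*p.2^2 + c3*p.2^3) + (a0 + a1*p.2)*p.1,
         -p.1 - (b1*p.2 + b2*p.2^2))) (0, 0) := by
  subst h1 h3
  constructor
  · norm_num [Prod.ext_iff]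
  -- the polynomial data
  set Q : ℝ → ℝ := fun y => c1/2 + c2*y/3 + c3*y^2/4 - (a0 + b2*y)^2/2 with hQdef
  set Qd : ℝ → ℝ := fun y => c2/3 + c3*y/2 - (a0 + b2*y)*b2 with hQddef
  set R : ℝ → ℝ := fun y => 2*Q y + y*Qd y with hRdef
  have hQc : Continuous Q := by fun_prop
  have hQdc : Continuous Qd := by fun_prop
  have hRc : Continuous R := by fun_prop
  have hQ0 : 0 < Q 0 := by simp only [hQdef]; nlinarith [h2]
  have hR0 : 0 < R 0 := by simp only [hRdef, hQdef, hQddef]; nlinarith [h2]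
  -- choose δ
  obtain ⟨δ, hδpos, hQpos, hRpos⟩ :
      ∃ δ : ℝ, 0 < δ ∧ (∀ y ∈ Icc (-δ) δ, 0 < Q y) ∧ (∀ y ∈ Icc (-δ) δ, 0 < R y) := by
    have hW : IsOpen {y : ℝ | 0 < Q y ∧ 0 < R y} :=
      (isOpen_lt continuous_const hQc).inter (isOpen_lt continuous_const hRc)
    obtain ⟨ε₀, hε₀, hball⟩ := Metric.isOpen_iff.1 hW 0 ⟨hQ0, hR0⟩
    have hmem : ∀ y ∈ Icc (-(ε₀/2)) (ε₀/2), y ∈ Metric.ball (0:ℝ) ε₀ := by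
      intro y hy
      rw [Metric.mem_ball, Real.dist_eq, sub_zero, abs_lt]
      rcases hy with ⟨hy1, hy2⟩
      constructor <;> linarith
    exact ⟨ε₀/2, by linarith, fun y hy => (hball (hmem y hy)).1,
      fun y hy => (hball (hmem y hy)).2⟩
  -- the half-energy coordinate φ and its derivative φd
  set φ : ℝ → ℝ := fun y => y * Real.sqrt (2 * Q y) with hφdef
  set φd : ℝ → ℝ := fun y => R y / Real.sqrt (2 * Q y) with hφddef
  have hφc : Continuous φ := by
    apply continuous_id.mul
    exact Real.continuous_sqrt.comp (by fun_prop)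
  have hφ0 : φ 0 = 0 := by simp [hφdef]
  have hsqpos : ∀ y ∈ Icc (-δ) δ, 0 < Real.sqrt (2 * Q y) := fun y hy =>
    Real.sqrt_pos.2 (by linarith [hQpos y hy])
  have hφdpos : ∀ y ∈ Icc (-δ) δ, 0 < φd y := fun y hy =>
    div_pos (hRpos y hy) (hsqpos y hy)
  have hφ' : ∀ y ∈ Icc (-δ) δ, HasDerivAt φ (φd y) y := by
    intro y hy
    have hQy := hQpos y hy
    have hy2 : HasDerivAt (fun u : ℝ => u^2) (2*y) y := by simpa using hasDerivAt_pow 2 y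
    have hb : HasDerivAt (fun u : ℝ => a0 + b2*u) b2 y := by
      simpa using (hasDerivAt_const y a0).fun_add ((hasDerivAt_id y).const_mul b2)
    have hbsq : HasDerivAt (fun u : ℝ => (a0 + b2*u)^2) (2*(a0+b2*y)*b2) y := by
      simpa using hb.fun_pow 2
    have h2Q : HasDerivAt (fun u : ℝ => 2 * Q u) (2 * Qd y) y := by
      have h := (((hasDerivAt_const y c1).fun_add
          ((hasDerivAt_id y).const_mul (2*c2/3))).fun_add
          (hy2.const_mul (c3/2))).fun_sub hbsq
      simp only [id_eq] at h
      have heq : (fun u : ℝ => c1 + 2*c2/3 * u + c3/2 * u^2 - (a0+b2*u)^2)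
          = fun u : ℝ => 2 * Q u := by
        funext u; simp only [hQdef]; ring
      rw [heq] at h
      refine h.congr_deriv ?_; symm
      simp only [hQddef]; ring
    have hs : HasDerivAt (fun u : ℝ => Real.sqrt (2 * Q u))
        (2 * Qd y / (2 * Real.sqrt (2 * Q y))) y := h2Q.sqrt (by positivity)
    have hmul := (hasDerivAt_id y).fun_mul hs
    have hss : Real.sqrt (2 * Q y) ≠ 0 := (hsqpos y hy).ne'
    refine hmul.congr_deriv ?_; symm
    obtain ⟨s, hs0, hs2, hseq⟩ : ∃ s:ℝ, s ≠ 0 ∧ s*s = 2*Q y ∧ Real.sqrt (2*Q y) = s :=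
      ⟨_, hss, Real.mul_self_sqrt (by linarith), rfl⟩
    simp only [hφddef, hRdef, id_eq, hseq]
    field_simp
    linear_combination (-1) * hs2
  -- strict monotonicity of φ on [-δ, δ]
  have hφmono : StrictMonoOn φ (Icc (-δ) δ) := by
    apply strictMonoOn_of_hasDerivWithinAt_pos (convex_Icc _ _) hφc.continuousOn
      (f' := φd)
    · intro x hx
      rw [interior_Icc] at hx
      exact ((hφ' x (Ioo_subset_Icc_self hx)).hasDerivWithinAt)
    · intro x hx
      rw [interior_Icc] at hx
      exact hφdpos x (Ioo_subset_Icc_self hx)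
  -- clamped extension of φ to a global increasing bijection
  set cl : ℝ → ℝ := fun y => max (-δ) (min δ y) with hcldef
  have hcl_mem : ∀ y, cl y ∈ Icc (-δ) δ := fun y =>
    ⟨le_max_left _ _, max_le (by linarith) (min_le_left _ _)⟩
  have hcl_eq : ∀ y ∈ Icc (-δ) δ, cl y = y := by
    intro y hy
    simp only [hcldef]
    rw [min_eq_right hy.2, max_eq_right hy.1]
  have hcl_lip : ∀ u v : ℝ, u ≤ v → cl v ≤ cl u + (v - u) := by
    intro u v huv
    have key1 : min δ v ≤ min δ u + (v - u) := by
      have h := min_le_min (by linarith : δ ≤ δ + (v - u)) (le_of_eq (by ring : v = u + (v - u)))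
      calc min δ v ≤ min (δ + (v-u)) (u + (v-u)) := h
        _ = min δ u + (v - u) := by rw [← min_add_add_right]
    simp only [hcldef]
    apply max_le
    · have : -δ ≤ max (-δ) (min δ u) := le_max_left _ _
      linarith
    · have : min δ u ≤ max (-δ) (min δ u) := le_max_right _ _
      linarith
  set φt : ℝ → ℝ := fun y => φ (cl y) + (y - cl y) with hφtdef
  have hφt_eq : ∀ y ∈ Icc (-δ) δ, φt y = φ y := by
    intro y hy; simp only [hφtdef]; rw [hcl_eq y hy]; ring
  have hclc : Continuous cl := continuous_const.max (continuous_const.min continuous_id)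
  have hφtc : Continuous φt := ((hφc.comp hclc).add (continuous_id.sub hclc))
  have hφtmono : StrictMono φt := by
    intro x y hxy
    rcases le_or_gt δ x with hx | hx
    · have hcx : cl x = δ := by
        simp only [hcldef]; rw [min_eq_left hx, max_eq_right (by linarith)]
      have hcy : cl y = δ := by
        simp only [hcldef]; rw [min_eq_left (by linarith), max_eq_right (by linarith)]
      simp only [hφtdef, hcx, hcy]
      linarith
    · rcases le_or_gt y (-δ) with hy | hy
      · have hcx : cl x = -δ := by
          simp only [hcldef]; rw [min_eq_right (by linarith), max_eq_left (by linarith)]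
        have hcy : cl y = -δ := by
          simp only [hcldef]; rw [min_eq_right (by linarith), max_eq_left (by linarith)]
        simp only [hφtdef, hcx, hcy]
        linarith
      · have h1 : cl x < cl y := by
          rcases le_or_gt x (-δ) with h | h
          · have hcx : cl x = -δ := by
              simp only [hcldef]; rw [min_eq_right (by linarith), max_eq_left (by linarith)]
            have hmy : -δ < min δ y := lt_min (by linarith) hy
            have : -δ < cl y := lt_of_lt_of_le hmy (le_max_right _ _)
            rw [hcx]; exact this
          · have hcx : cl x = x := hcl_eq x ⟨le_of_lt h, le_of_lt hx⟩
            have : x < min δ y := lt_min hx hxy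
            have : x < cl y := lt_of_lt_of_le this (le_max_right _ _)
            rw [hcx]; exact this
        have h2 : cl y - cl x ≤ y - x := by
          have := hcl_lip x y (le_of_lt hxy)
          linarith
        have h3 : φ (cl x) < φ (cl y) := hφmono (hcl_mem x) (hcl_mem y) h1
        simp only [hφtdef]
        linarith
  have hφtsurj : Function.Surjective φt := by
    apply hφtc.surjective
    · -- tendsto atTop
      apply Tendsto.congr' (f₁ := fun y => φ δ + (y - δ))
      · filter_upwards [Filter.Ici_mem_atTop δ] with y hy
        rw [Set.mem_Ici] at hy
        have hcy : cl y = δ := by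
          simp only [hcldef]; rw [min_eq_left hy, max_eq_right (by linarith)]
        simp only [hφtdef, hcy]
      · exact tendsto_atTop_add_const_left _ _ (tendsto_atTop_add_const_right _ _ tendsto_id)
    · apply Tendsto.congr' (f₁ := fun y => φ (-δ) + (y + δ))
      · filter_upwards [Filter.Iic_mem_atBot (-δ)] with y hy
        rw [Set.mem_Iic] at hy
        have hcy : cl y = -δ := by
          simp only [hcldef]; rw [min_eq_right (by linarith), max_eq_left (by linarith)]
        simp only [hφtdef, hcy]
        ring
      · exact tendsto_atBot_add_const_left _ _ (tendsto_atBot_add_const_right _ _ tendsto_id)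
  -- the inverse ψ
  set E2 := StrictMono.orderIsoOfSurjective φt hφtmono hφtsurj with hE2
  set ψ : ℝ → ℝ := fun x => E2.symm x with hψdef
  have hψφt : ∀ y, ψ (φt y) = y := fun y =>
    StrictMono.orderIsoOfSurjective_symm_apply_self φt hφtmono hφtsurj y
  have hφtψ : ∀ x, φt (ψ x) = x := fun x =>
    StrictMono.orderIsoOfSurjective_self_symm_apply φt hφtmono hφtsurj x
  have hψc : Continuous ψ := OrderIso.continuous E2.symm
  have hψmono : StrictMono ψ := E2.symm.strictMono
  have hψφ : ∀ y ∈ Icc (-δ) δ, ψ (φ y) = y := by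
    intro y hy
    rw [← hφt_eq y hy]
    exact hψφt y
  have hψ0 : ψ 0 = 0 := by
    have := hψφ 0 ⟨by linarith, by linarith⟩
    rwa [hφ0] at this
  -- the size η of the working window
  set η : ℝ := min (φ δ) (-φ (-δ)) with hηdef
  have hφδpos : 0 < φ δ := by
    have := hφmono (⟨by linarith, by linarith⟩ : (0:ℝ) ∈ Icc (-δ) δ)
      (⟨by linarith, le_refl δ⟩ : δ ∈ Icc (-δ) δ) hδpos
    rwa [hφ0] at this
  have hφδneg : φ (-δ) < 0 := by
    have := hφmono (⟨le_refl (-δ), by linarith⟩ : -δ ∈ Icc (-δ) δ)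
      (⟨by linarith, by linarith⟩ : (0:ℝ) ∈ Icc (-δ) δ) (by linarith)
    rwa [hφ0] at this
  have hηpos : 0 < η := lt_min hφδpos (by linarith)
  have hψ_mem : ∀ x : ℝ, |x| < η → ψ x ∈ Ioo (-δ) δ := by
    intro x hx
    rw [abs_lt] at hx
    constructor
    · have h1 : φt (-δ) < x := by
        rw [hφt_eq _ ⟨le_refl _, by linarith⟩]
        have hm : η ≤ -φ (-δ) := min_le_right _ _
        linarith [hx.1]
      have := hψmono h1
      rwa [hψφt] at this
    · have h1 : x < φt δ := by
        rw [hφt_eq _ ⟨by linarith, le_refl _⟩]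
        exact lt_of_lt_of_le hx.2 (min_le_left _ _)
      have := hψmono h1
      rwa [hψφt] at this
  have hφψ : ∀ x : ℝ, |x| < η → φ (ψ x) = x := by
    intro x hx
    rw [← hφt_eq _ (Ioo_subset_Icc_self (hψ_mem x hx))]
    exact hφtψ x
  have hψ' : ∀ x : ℝ, |x| < η → HasDerivAt ψ ((φd (ψ x))⁻¹) x := by
    intro x hx
    have hmem := hψ_mem x hx
    have hIcc : ψ x ∈ Icc (-δ) δ := Ioo_subset_Icc_self hmem
    have hpos : 0 < φd (ψ x) := hφdpos _ hIcc
    have hfeq : φ =ᶠ[nhds (ψ x)] φt := by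
      filter_upwards [isOpen_Ioo.mem_nhds hmem] with u hu
      exact (hφt_eq u (Ioo_subset_Icc_self hu)).symm
    have hφty : HasDerivAt φt (φd (ψ x)) (ψ x) :=
      (hφ' _ hIcc).congr_of_eventuallyEq hfeq.symm
    exact HasDerivAt.of_local_left_inverse hψc.continuousAt hφty hpos.ne'
      (Filter.Eventually.of_forall hφtψ)
  -- bounds on φd over the compact window
  have hφdcont : ContinuousOn φd (Icc (-δ) δ) := by
    apply ContinuousOn.div hRc.continuousOn
      ((Real.continuous_sqrt.comp (by fun_prop)).continuousOn)
    exact fun y hy => (hsqpos y hy).ne'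
  obtain ⟨ym, hymK, hym⟩ := isCompact_Icc.exists_isMinOn
    (⟨0, by constructor <;> linarith⟩ : (Icc (-δ) δ).Nonempty) hφdcont
  obtain ⟨yM, hyMK, hyM⟩ := isCompact_Icc.exists_isMaxOn
    (⟨0, by constructor <;> linarith⟩ : (Icc (-δ) δ).Nonempty) hφdcont
  set m : ℝ := φd ym with hmdef
  set M : ℝ := φd yM with hMdef
  have hmpos : 0 < m := hφdpos ym hymK
  have hmle : ∀ y ∈ Icc (-δ) δ, m ≤ φd y := fun y hy => hym hy
  have hMge : ∀ y ∈ Icc (-δ) δ, φd y ≤ M := fun y hy => hyM hy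
  -- choose ε
  obtain ⟨ε, hεpos, hεsub⟩ :
      ∃ ε > 0, ∀ z : ℝ × ℝ, ‖z - ((0:ℝ),(0:ℝ))‖ < ε →
        z.2 ∈ Ioo (-δ) δ ∧ (z.1 + (a0*z.2 + b2*z.2^2))^2 + (φ z.2)^2 < η^2 := by
    have hUopen : IsOpen {z : ℝ × ℝ | z.2 ∈ Ioo (-δ) δ ∧
        (z.1 + (a0*z.2 + b2*z.2^2))^2 + (φ z.2)^2 < η^2} := by
      rw [Set.setOf_and]
      apply IsOpen.inter (isOpen_Ioo.preimage continuous_snd)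
      apply isOpen_lt _ continuous_const
      have hcφ2 : Continuous fun z : ℝ × ℝ => φ z.2 := hφc.comp continuous_snd
      exact ((continuous_fst.add (by fun_prop)).pow 2).add (hcφ2.pow 2)
    have h0mem : ((0:ℝ),(0:ℝ)) ∈ {z : ℝ × ℝ | z.2 ∈ Ioo (-δ) δ ∧
        (z.1 + (a0*z.2 + b2*z.2^2))^2 + (φ z.2)^2 < η^2} := by
      constructor
      · exact ⟨by simpa using hδpos, hδpos⟩
      · simpa [hφ0] using (by positivity : (0:ℝ) < η^2)
    obtain ⟨ε, hε, hball⟩ := Metric.isOpen_iff.1 hUopen _ h0mem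
    refine ⟨ε, hε, fun z hz => hball ?_⟩
    rw [Metric.mem_ball, dist_eq_norm]
    exact hz
  clear_value Q Qd R φd cl φt m M η
  refine ⟨ε, hεpos, ?_⟩
  rintro z hz0 hznorm
  obtain ⟨hzy, hzr⟩ := hεsub z hznorm
  set y₀ : ℝ := z.2 with hy₀def
  set u₀ : ℝ := z.1 + (a0*y₀ + b2*y₀^2) with hu₀def
  set w₀ : ℝ := φ y₀ with hw₀def
  set r : ℝ := Real.sqrt (u₀^2 + w₀^2) with hrdef
  have hrη : r < η := by
    rw [hrdef]
    exact (Real.sqrt_lt' hηpos).2 hzr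
  have hrpos : 0 < r := by
    rw [hrdef, Real.sqrt_pos]
    rcases eq_or_ne u₀ 0 with hu | hu
    · rcases eq_or_ne w₀ 0 with hw | hw
      · exfalso
        have hy0 : y₀ = 0 := by
          have hsq := hsqpos y₀ (Ioo_subset_Icc_self hzy)
          have h := hw
          rw [hw₀def, hφdef] at h
          simp only at h
          rcases mul_eq_zero.1 h with h' | h'
          · exact h'
          · exact absurd h' hsq.ne'
        apply hz0
        have hz1 : z.1 = 0 := by
          have h := hu
          rw [hu₀def, hy0] at h
          simpa using h
        exact Prod.ext hz1 hy0
      · positivity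
    · positivity
  -- initial angle
  set ζ : ℂ := u₀ + w₀*Complex.I with hζdef
  have hζre : ζ.re = u₀ := by simp [hζdef]
  have hζim : ζ.im = w₀ := by simp [hζdef]
  have habs : ‖ζ‖ = r := by rw [hζdef, Complex.norm_add_mul_I]
  have hζ0 : ζ ≠ 0 := by
    intro h
    rw [h, norm_zero] at habs
    exact hrpos.ne' habs.symm
  set θ₀ : ℝ := Complex.arg ζ with hθ₀def
  have hcosθ₀ : r * Real.cos θ₀ = u₀ := by
    rw [hθ₀def, Complex.cos_arg hζ0, habs, hζre]
    field_simp
  have hsinθ₀ : r * Real.sin θ₀ = w₀ := by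
    rw [hθ₀def, Complex.sin_arg, habs, hζim]
    field_simp
  -- the angular speed
  set g : ℝ → ℝ := fun σ => φd (ψ (r * Real.sin σ)) with hgdef
  have hxs : ∀ σ : ℝ, |r * Real.sin σ| < η := by
    intro σ
    rw [abs_mul, abs_of_pos hrpos]
    calc r * |Real.sin σ| ≤ r * 1 :=
          mul_le_mul_of_nonneg_left (Real.abs_sin_le_one σ) hrpos.le
      _ = r := mul_one r
      _ < η := hrη
  have hgmem : ∀ σ, ψ (r * Real.sin σ) ∈ Icc (-δ) δ := fun σ =>
    Ioo_subset_Icc_self (hψ_mem _ (hxs σ))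
  have hgm : ∀ σ, m ≤ g σ := fun σ => hmle _ (hgmem σ)
  have hgM : ∀ σ, g σ ≤ M := fun σ => hMge _ (hgmem σ)
  have hgc : Continuous g := by
    exact hφdcont.comp_continuous
      (hψc.comp (continuous_const.mul Real.continuous_sin)) hgmem
  have hgper : Function.Periodic g (2*Real.pi) := by
    intro σ
    simp only [hgdef]
    rw [Real.sin_periodic σ]
  obtain ⟨θ, L, hLpos, hθinit, hθ', hθper, hθsurj⟩ :=
    scalarODE g hgc m M hmpos hgm hgM hgper θ₀
  -- the periodic orbit
  set yc : ℝ → ℝ := fun t => ψ (r * Real.sin (θ t)) with hycdef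
  set γ : ℝ → ℝ × ℝ := fun t =>
    (r * Real.cos (θ t) - (a0 * yc t + b2 * (yc t)^2), yc t) with hγdef
  have hginner : ∀ t, g (θ t) = φd (yc t) := fun t => rfl
  have hycIcc : ∀ t, yc t ∈ Icc (-δ) δ := fun t => hgmem (θ t)
  have hyc0 : yc 0 = y₀ := by
    simp only [hycdef, hθinit, hsinθ₀, hw₀def]
    exact hψφ y₀ (Ioo_subset_Icc_self hzy)
  have hγ0 : γ 0 = z := by
    apply Prod.ext
    · show r * Real.cos (θ 0) - (a0 * yc 0 + b2 * (yc 0)^2) = z.1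
      rw [hθinit, hcosθ₀, hyc0, hu₀def]
      ring
    · exact hyc0
  -- the derivative verification
  have hderiv : ∀ t : ℝ, HasDerivAt γ
      ((c1*(yc t) + c2*(yc t)^2 + c3*(yc t)^3
          + (a0 + 2*b2*(yc t)) * (r * Real.cos (θ t) - (a0 * yc t + b2 * (yc t)^2)),
        -(r * Real.cos (θ t) - (a0 * yc t + b2 * (yc t)^2))
          - (a0 * yc t + b2 * (yc t)^2))) t := by
    intro t
    have hst := hθ' t
    have hsin' : HasDerivAt (fun t => r * Real.sin (θ t))
        (r * (Real.cos (θ t) * -(g (θ t)))) t :=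
      ((Real.hasDerivAt_sin (θ t)).comp t hst).const_mul r
    have hψ't := hψ' (r * Real.sin (θ t)) (hxs (θ t))
    have hyc' : HasDerivAt yc
        ((φd (yc t))⁻¹ * (r * (Real.cos (θ t) * -(g (θ t))))) t := hψ't.comp t hsin'
    have hφdne : φd (yc t) ≠ 0 := (hφdpos _ (hycIcc t)).ne'
    have hyc'' : HasDerivAt yc (-(r * Real.cos (θ t))) t := by
      convert hyc' using 1
      rw [hginner]
      field_simp
    have hcos' : HasDerivAt (fun t => r * Real.cos (θ t))
        (r * (-Real.sin (θ t) * -(g (θ t)))) t :=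
      ((Real.hasDerivAt_cos (θ t)).comp t hst).const_mul r
    have hy2' : HasDerivAt (fun t => (yc t)^2) (2 * yc t * -(r * Real.cos (θ t))) t := by
      simpa using hyc''.fun_pow 2
    have hx1 : HasDerivAt (fun t => r * Real.cos (θ t) - (a0 * yc t + b2 * (yc t)^2))
        (r * (-Real.sin (θ t) * -(g (θ t)))
          - (a0 * -(r * Real.cos (θ t)) + b2 * (2 * yc t * -(r * Real.cos (θ t))))) t :=
      hcos'.sub ((hyc''.const_mul a0).add (hy2'.const_mul b2))
    have hrs : r * Real.sin (θ t) = φ (yc t) := (hφψ _ (hxs (θ t))).symm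
    have hkey1 : φ (yc t) * φd (yc t) = yc t * R (yc t) := by
      have hss := (hsqpos _ (hycIcc t)).ne'
      obtain ⟨s, hs0, hseq⟩ : ∃ s:ℝ, s ≠ 0 ∧ Real.sqrt (2*Q (yc t)) = s := ⟨_, hss, rfl⟩
      simp only [hφdef, hφddef, hseq]
      field_simp
    have hkey2 : yc t * R (yc t) = c1*(yc t) + c2*(yc t)^2 + c3*(yc t)^3
        - (a0 + 2*b2*yc t)*(a0*yc t + b2*(yc t)^2) := by
      simp only [hRdef, hQdef, hQddef]; ring
    refine HasDerivAt.prodMk ?_ ?_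
    · refine hx1.congr_deriv ?_; symm
      rw [hginner]
      linear_combination -hkey2 - hkey1 - φd (yc t) * hrs
    · refine hyc''.congr_deriv ?_; symm
      ring
  -- periodicity of the orbit
  have hθL : θ L = θ₀ - 2*Real.pi := by
    have := hθper 0
    rwa [zero_add, hθinit] at this
  have hγL : γ L = z := by
    rw [← hγ0]
    simp only [hγdef, hycdef, hθL, hθinit, Real.cos_periodic.sub_eq, Real.sin_periodic.sub_eq]
  -- nonconstancy
  clear_value ψ E2 g
  obtain ⟨t1, ht1⟩ := hθsurj 0
  obtain ⟨t2, ht2⟩ := hθsurj Real.pi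
  have hne : γ t1 ≠ γ t2 := by
    simp only [hγdef, hycdef, ht1, ht2, Real.sin_zero, Real.sin_pi, mul_zero, hψ0,
      Real.cos_zero, Real.cos_pi, Prod.mk.injEq, mul_one, ne_eq]
    intro hcon
    obtain ⟨hcon1, -⟩ := hcon
    linarith [hrpos]
  refine ⟨γ, L, hLpos, hγ0, ?_, hγL, t1, t2, hne⟩
  intro t
  have hfst : (γ t).1 = r * Real.cos (θ t) - (a0 * yc t + b2 * (yc t)^2) := rfl
  have hsnd : (γ t).2 = yc t := rfl
  show HasDerivAt γ
      ((c1*(γ t).2 + c2*(γ t).2^2 + c3*(γ t).2^3) + (a0 + 2*b2*(γ t).2)*(γ t).1,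
        -(γ t).1 - (a0*(γ t).2 + b2*(γ t).2^2)) t
  rw [hfst, hsnd]
  exact hderiv t
end

section
/- If a₀ = b₁, c₁ - a₀ b₁ > 0 and c₂ = a₀ (a₁ + b₂) (the pull-back case), then the vector field Y has a center at the origin. -/
noncomputable section

namespace CenterPB

open Real Set

/-- Numerator of the angular ODE. -/
def Nf (k e θ r : ℝ) : ℝ := k*r^2*Real.cos θ*(Real.sin θ)^2 + e*r^3*(Real.cos θ)^3*Real.sin θ
/-- Denominator (angular speed). -/
def Df (ω k e θ r : ℝ) : ℝ := ω + k*r*(Real.cos θ)^2*Real.sin θ + e*r^2*(Real.cos θ)^4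
/-- Right-hand side of the angular ODE `dr/dθ = Ff ω k e θ r`. -/
def Ff (ω k e θ r : ℝ) : ℝ := Nf k e θ r / Df ω k e θ r

variable {ω k e : ℝ}

lemma Ff_shift (ω k e : ℝ) (n : ℤ) (θ r : ℝ) : Ff ω k e (θ + n*(2*π)) r = Ff ω k e θ r := by
  unfold Ff Nf Df
  rw [Real.cos_add_int_mul_two_pi, Real.sin_add_int_mul_two_pi]

lemma Ff_reflect (ω k e : ℝ) (m : ℤ) (θ r : ℝ) :
    Ff ω k e (2*(π/2 + m*π) - θ) r = - Ff ω k e θ r := by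
  have h1 : (2*(π/2 + m*π) - θ) = (π - θ) + m*(2*π) := by ring
  rw [h1, Ff_shift]
  unfold Ff Nf Df
  rw [Real.cos_pi_sub, Real.sin_pi_sub]
  ring_nf

lemma abs_Nf_le {θ r : ℝ} (h0 : 0 ≤ r) (hr1 : r ≤ 1) :
    |Nf k e θ r| ≤ (|k| + |e|) * r^2 := by
  have hc := Real.abs_cos_le_one θ
  have hs := Real.abs_sin_le_one θ
  have hr3 : r^3 ≤ r^2 := pow_le_pow_of_le_one h0 hr1 (by norm_num)
  calc |Nf k e θ r| ≤ |k*r^2*Real.cos θ*(Real.sin θ)^2| + |e*r^3*(Real.cos θ)^3*Real.sin θ| :=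
        abs_add_le _ _
    _ = |k| * r^2 * |Real.cos θ| * |Real.sin θ|^2
        + |e| * r^3 * |Real.cos θ|^3 * |Real.sin θ| := by
        rw [abs_mul, abs_mul, abs_mul, abs_mul, abs_mul, abs_mul, abs_pow, abs_pow, abs_pow,
          abs_pow]; rw [abs_of_nonneg h0]
    _ ≤ |k| * r^2 * 1 * 1^2 + |e| * r^3 * 1^3 * 1 := by gcongr <;> positivity
    _ = |k| * r^2 + |e| * r^3 := by ring
    _ ≤ |k| * r^2 + |e| * r^2 := by gcongr
    _ = (|k| + |e|) * r^2 := by ring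

lemma abs_Df_sub_le {θ r : ℝ} (h0 : 0 ≤ r) (hr1 : r ≤ 1) :
    |Df ω k e θ r - ω| ≤ (|k| + |e|) * r := by
  have hc := Real.abs_cos_le_one θ
  have hs := Real.abs_sin_le_one θ
  have hr2 : r^2 ≤ r := by nlinarith
  have h2 : Df ω k e θ r - ω = k*r*(Real.cos θ)^2*Real.sin θ + e*r^2*(Real.cos θ)^4 := by
    unfold Df; ring
  calc |Df ω k e θ r - ω|
      ≤ |k*r*(Real.cos θ)^2*Real.sin θ| + |e*r^2*(Real.cos θ)^4| := by rw [h2]; exact abs_add_le _ _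
    _ = |k| * r * |Real.cos θ|^2 * |Real.sin θ| + |e| * r^2 * |Real.cos θ|^4 := by
        rw [abs_mul, abs_mul, abs_mul, abs_mul, abs_mul, abs_pow, abs_pow, abs_pow]
        rw [abs_of_nonneg h0]
    _ ≤ |k| * r * 1^2 * 1 + |e| * r^2 * 1^4 := by gcongr <;> positivity
    _ = |k| * r + |e| * r^2 := by ring
    _ ≤ |k| * r + |e| * r := by gcongr
    _ = (|k| + |e|) * r := by ring

/-- The hypotheses of the Picard–Lindelöf theorem in the older form. -/
structure OldPL (v : ℝ → ℝ → ℝ) (tMin t₀ tMax : ℝ) (x₀ : ℝ) (L : NNReal) (R C : ℝ) : Prop where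
  ht₀ : t₀ ∈ Icc tMin tMax
  hR : 0 ≤ R
  lipschitz : ∀ t ∈ Icc tMin tMax, LipschitzOnWith L (v t) (Metric.closedBall x₀ R)
  cont : ∀ x ∈ Metric.closedBall x₀ R, ContinuousOn (v · x) (Icc tMin tMax)
  norm_le : ∀ t ∈ Icc tMin tMax, ∀ x ∈ Metric.closedBall x₀ R, ‖v t x‖ ≤ C
  C_mul_le : C * max (tMax - t₀) (t₀ - tMin) ≤ R

/-- Picard–Lindelöf with the extra conclusion that the solution stays in the closed ball. -/
theorem pl_exists {v : ℝ → ℝ → ℝ} {tMin t₀ tMax : ℝ} (x₀ : ℝ) {C R : ℝ} {L : NNReal}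
    (hpl : OldPL v tMin t₀ tMax x₀ L R C) :
    ∃ f : ℝ → ℝ, f t₀ = x₀ ∧ ∀ t ∈ Icc tMin tMax,
      f t ∈ Metric.closedBall x₀ R ∧ HasDerivWithinAt f (v t (f t)) (Icc tMin tMax) t := by
  lift C to NNReal using (norm_nonneg _).trans
    (hpl.norm_le t₀ hpl.ht₀ x₀ (Metric.mem_closedBall_self hpl.hR))
  lift R to NNReal using hpl.hR
  lift t₀ to Icc tMin tMax using hpl.ht₀
  have hf : IsPicardLindelof v t₀ x₀ R 0 C L :=
    ⟨hpl.lipschitz, hpl.cont, hpl.norm_le, by simpa using hpl.C_mul_le⟩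
  obtain ⟨α, hα⟩ := ODE.FunSpace.exists_isFixedPt_next hf (Metric.mem_closedBall_self le_rfl)
  refine ⟨α.compProj, ?_, fun t ht => ⟨α.compProj_mem_closedBall hf.mul_max_le, ?_⟩⟩
  · rw [ODE.FunSpace.compProj_val, ← hα, ODE.FunSpace.next_apply₀]
  · apply ODE.hasDerivWithinAt_picard_Icc t₀.2 hf.continuousOn_uncurry
      α.continuous_compProj.continuousOn (fun _ _ ↦ α.compProj_mem_closedBall hf.mul_max_le)
      x₀ ht |>.congr_of_mem _ ht
    intro t' ht'
    nth_rw 1 [← hα]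
    rw [ODE.FunSpace.compProj_of_mem ht', ODE.FunSpace.next_apply]


lemma contDiff_cos_fst : ContDiff ℝ 1 (fun p : ℝ × ℝ => Real.cos p.1) :=
  (Real.contDiff_cos.of_le le_top).comp contDiff_fst

lemma contDiff_sin_fst : ContDiff ℝ 1 (fun p : ℝ × ℝ => Real.sin p.1) :=
  (Real.contDiff_sin.of_le le_top).comp contDiff_fst

lemma contDiff_Nf : ContDiff ℝ 1 (fun p : ℝ × ℝ => Nf k e p.1 p.2) := by
  unfold Nf
  exact (((contDiff_const.mul (contDiff_snd.pow 2)).mul contDiff_cos_fst).mul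
    (contDiff_sin_fst.pow 2)).add
    (((contDiff_const.mul (contDiff_snd.pow 3)).mul (contDiff_cos_fst.pow 3)).mul
    contDiff_sin_fst)

lemma contDiff_Df : ContDiff ℝ 1 (fun p : ℝ × ℝ => Df ω k e p.1 p.2) := by
  unfold Df
  exact (contDiff_const.add
    (((contDiff_const.mul contDiff_snd).mul (contDiff_cos_fst.pow 2)).mul contDiff_sin_fst)).add
    ((contDiff_const.mul (contDiff_snd.pow 2)).mul (contDiff_cos_fst.pow 4))

lemma exists_unif_lip (ω k e : ℝ) {r₀ : ℝ}
    (hD : ∀ θ r, r ∈ Metric.closedBall r₀ (r₀/2) → Df ω k e θ r ≠ 0)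
    (hshift : ∀ (n : ℤ) (θ r : ℝ), Ff ω k e (θ + n*(2*π)) r = Ff ω k e θ r) :
    ∃ L : NNReal, ∀ t : ℝ, LipschitzOnWith L (fun x => Ff ω k e t x) (Metric.closedBall r₀ (r₀/2)) := by
  set S := Metric.closedBall r₀ (r₀/2) with hS
  set U : Set (ℝ × ℝ) := {p | Df ω k e p.1 p.2 ≠ 0} with hU
  have hUopen : IsOpen U := by
    have : Continuous (fun p : ℝ × ℝ => Df ω k e p.1 p.2) := contDiff_Df.continuous
    exact isOpen_ne_fun this continuous_const
  set G : ℝ × ℝ → ℝ := fun p => Ff ω k e p.1 p.2 with hG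
  have hGc1 : ContDiffOn ℝ 1 G U := by
    apply ContDiffOn.div (contDiff_Nf.contDiffOn) (contDiff_Df.contDiffOn)
    exact fun p hp => hp
  set K : Set (ℝ × ℝ) := Icc 0 (2*π) ×ˢ S with hK
  have hKU : K ⊆ U := fun p hp => hD p.1 p.2 hp.2
  have hKcomp : IsCompact K := (isCompact_Icc).prod (isCompact_closedBall _ _)
  have hKconv : Convex ℝ K := (convex_Icc _ _).prod (convex_closedBall _ _)
  have hfd : ContinuousOn (fderiv ℝ G) U := hGc1.continuousOn_fderiv_of_isOpen hUopen le_rfl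
  obtain ⟨M, hM⟩ := hKcomp.exists_bound_of_continuousOn (hfd.mono hKU)
  set L : NNReal := ⟨max M 0, le_max_right _ _⟩ with hL
  have hdiff : ∀ p ∈ K, DifferentiableAt ℝ G p := by
    intro p hp
    exact (hGc1.contDiffAt (hUopen.mem_nhds (hKU hp))).differentiableAt one_ne_zero
  have hbound : ∀ p ∈ K, ‖fderiv ℝ G p‖₊ ≤ L := by
    intro p hp
    rw [← NNReal.coe_le_coe]
    exact le_trans (hM p hp) (le_max_left _ _)
  have hlipK : LipschitzOnWith L G K := hKconv.lipschitzOnWith_of_nnnorm_fderiv_le hdiff hbound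
  refine ⟨L, fun t => ?_⟩
  -- reduce t to [0, 2π]
  set n : ℤ := ⌊t/(2*π)⌋ with hn
  set t' : ℝ := t - n*(2*π) with ht'
  have hpi : (0:ℝ) < 2*π := by positivity
  have ht'mem : t' ∈ Icc 0 (2*π) := by
    constructor
    · have h1 := (le_div_iff₀ hpi).mp (Int.floor_le (t/(2*π)))
      rw [ht']; linarith
    · have h1 := (div_lt_iff₀ hpi).mp (Int.lt_floor_add_one (t/(2*π)))
      rw [ht']
      push_cast at h1 ⊢
      linarith
  have hfun : (fun x => Ff ω k e t x) = fun x => G (t', x) := by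
    funext x
    have : t = t' + n*(2*π) := by rw [ht']; ring
    rw [this, hshift]
  rw [hfun]
  have hcomp := hlipK.comp ((LipschitzWith.prodMk_left t').lipschitzOnWith (s := S))
    (fun x hx => mem_prod.mpr ⟨ht'mem, hx⟩)
  simpa only [mul_one, Function.comp_def] using hcomp


lemma ball_mem_iff {r : ℝ} (hr₀ : 0 < r₀) :
    r ∈ Metric.closedBall r₀ (r₀/2) ↔ r₀/2 ≤ r ∧ r ≤ 3*r₀/2 := by
  rw [Metric.mem_closedBall, Real.dist_eq, abs_sub_le_iff]
  constructor <;> intro h <;> constructor <;> linarith [h.1, h.2]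

lemma ball_facts (hr₀ : 0 < r₀) (h23 : r₀ ≤ 2/3) {r : ℝ}
    (hr : r ∈ Metric.closedBall r₀ (r₀/2)) : 0 ≤ r ∧ r ≤ 1 ∧ r₀/2 ≤ r ∧ r ≤ 3*r₀/2 := by
  rw [ball_mem_iff hr₀] at hr
  exact ⟨by linarith [hr.1], by linarith [hr.2], hr.1, hr.2⟩

lemma Df_bounds (hω : 0 < ω) (hr₀ : 0 < r₀) (h23 : r₀ ≤ 2/3)
    (hsm : 108*π*(|k|+|e|+1)*r₀ ≤ ω) (θ : ℝ) {r : ℝ} (hr : r ∈ Metric.closedBall r₀ (r₀/2)) :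
    ω/2 ≤ Df ω k e θ r ∧ Df ω k e θ r ≤ 2*ω := by
  obtain ⟨h0, h1, h2, h3⟩ := ball_facts hr₀ h23 hr
  have hB : (0:ℝ) ≤ |k| + |e| := by positivity
  have hπ := Real.pi_gt_three
  have h324 : 324*((|k|+|e|+1)*r₀) ≤ ω := by nlinarith
  have habs := abs_Df_sub_le (ω := ω) (k := k) (e := e) (θ := θ) h0 h1
  have h5 : (|k|+|e|)*r ≤ (|k|+|e|+1)*(3*r₀/2) := by nlinarith
  rw [abs_le] at habs
  constructor <;> nlinarith [habs.1, habs.2]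

lemma Ff_bound (hω : 0 < ω) (hr₀ : 0 < r₀) (h23 : r₀ ≤ 2/3)
    (hsm : 108*π*(|k|+|e|+1)*r₀ ≤ ω) (θ : ℝ) {r : ℝ} (hr : r ∈ Metric.closedBall r₀ (r₀/2)) :
    |Ff ω k e θ r| ≤ 6*(|k|+|e|+1)*r₀^2/ω := by
  obtain ⟨h0, h1, h2, h3⟩ := ball_facts hr₀ h23 hr
  have hB : (0:ℝ) ≤ |k| + |e| := by positivity
  have hD := Df_bounds hω hr₀ h23 hsm θ hr
  have hN := abs_Nf_le (k := k) (e := e) (θ := θ) h0 h1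
  have hN2 : |Nf k e θ r| ≤ 3*(|k|+|e|+1)*r₀^2 := by
    have hsq : r^2 ≤ (3*r₀/2)^2 := by nlinarith
    nlinarith [sq_nonneg r₀, mul_le_mul_of_nonneg_left hsq hB]
  have hDpos : 0 < Df ω k e θ r := by linarith
  rw [Ff, abs_div, abs_of_pos hDpos, div_le_div_iff₀ hDpos hω]
  nlinarith [abs_nonneg (Nf k e θ r)]

/-- Existence of a solution of the angular ODE on a 12π-window. -/
theorem exists_f (hω : 0 < ω) (hr₀ : 0 < r₀) (h23 : r₀ ≤ 2/3)
    (hsm : 108*π*(|k|+|e|+1)*r₀ ≤ ω) (θ₀ : ℝ) :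
    ∃ f : ℝ → ℝ, f θ₀ = r₀ ∧ ∀ θ ∈ Icc (θ₀-6*π) (θ₀+6*π),
      f θ ∈ Metric.closedBall r₀ (r₀/2) ∧
      HasDerivWithinAt f (Ff ω k e θ (f θ)) (Icc (θ₀-6*π) (θ₀+6*π)) θ := by
  have hπ := Real.pi_gt_three
  have hB : (0:ℝ) ≤ |k| + |e| := by positivity
  have hD0 : ∀ θ r, r ∈ Metric.closedBall r₀ (r₀/2) → Df ω k e θ r ≠ 0 := fun θ r hr =>
    ne_of_gt (by linarith [(Df_bounds hω hr₀ h23 hsm θ hr).1])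
  obtain ⟨L, hL⟩ := exists_unif_lip ω k e hD0 (Ff_shift ω k e)
  refine pl_exists r₀ (v := fun θ x => Ff ω k e θ x) (C := 6*(|k|+|e|+1)*r₀^2/ω)
    (R := r₀/2) (L := L) ⟨?_, ?_, ?_, ?_, ?_, ?_⟩
  · constructor <;> nlinarith
  · linarith
  · exact fun t _ => hL t
  · intro x hx
    have hcont : Continuous (fun θ : ℝ => Ff ω k e θ x) := by
      have hpair : Continuous (fun θ : ℝ => (θ, x)) := continuous_id.prodMk continuous_const
      have hN : Continuous (fun θ : ℝ => Nf k e θ x) := by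
        unfold Nf
        continuity
      have hDD : Continuous (fun θ : ℝ => Df ω k e θ x) := by
        unfold Df
        continuity
      exact hN.div hDD (fun θ => hD0 θ x hx)
    exact hcont.continuousOn
  · intro t _ x hx
    have := Ff_bound hω hr₀ h23 hsm t hx
    rwa [Real.norm_eq_abs]
  · have : max (θ₀ + 6*π - θ₀) (θ₀ - (θ₀ - 6*π)) = 6*π := by
      rw [show θ₀ + 6*π - θ₀ = 6*π by ring, show θ₀ - (θ₀ - 6*π) = 6*π by ring, max_self]
    rw [this, div_mul_eq_mul_div, div_le_iff₀ hω]
    nlinarith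


/-- A globally defined 2π-periodic solution of the angular ODE through `(θ₀, r₀)`. -/
theorem exists_rh (hω : 0 < ω) (hr₀ : 0 < r₀) (h23 : r₀ ≤ 2/3)
    (hsm : 108*π*(|k|+|e|+1)*r₀ ≤ ω) (θ₀ : ℝ) :
    ∃ rh : ℝ → ℝ, rh θ₀ = r₀ ∧ (∀ θ, rh θ ∈ Metric.closedBall r₀ (r₀/2)) ∧
      (∀ θ, HasDerivAt rh (Ff ω k e θ (rh θ)) θ) ∧ (∀ θ, rh (θ + 2*π) = rh θ) := by
  have hπ := Real.pi_gt_three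
  obtain ⟨f, hf0, hf⟩ := exists_f hω hr₀ h23 hsm θ₀
  have hmem : ∀ θ ∈ Icc (θ₀-6*π) (θ₀+6*π), f θ ∈ Metric.closedBall r₀ (r₀/2) :=
    fun θ hθ => (hf θ hθ).1
  have hfc : ContinuousOn f (Icc (θ₀-6*π) (θ₀+6*π)) := fun θ hθ =>
    ((hf θ hθ).2).continuousWithinAt
  have hfd : ∀ θ ∈ Ioo (θ₀-6*π) (θ₀+6*π), HasDerivAt f (Ff ω k e θ (f θ)) θ := fun θ hθ =>
    ((hf θ (Ioo_subset_Icc_self hθ)).2).hasDerivAt (Icc_mem_nhds hθ.1 hθ.2)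
  have hD0 : ∀ θ r, r ∈ Metric.closedBall r₀ (r₀/2) → Df ω k e θ r ≠ 0 := fun θ r hr =>
    ne_of_gt (by linarith [(Df_bounds hω hr₀ h23 hsm θ hr).1])
  obtain ⟨L, hL⟩ := exists_unif_lip ω k e hD0 (Ff_shift ω k e)
  -- reflection principle about any c = π/2 + m·π with θ₀ ≤ c ≤ θ₀ + 2π
  have reflect : ∀ m : ℤ, θ₀ ≤ π/2 + m*π → π/2 + m*π ≤ θ₀ + 2*π →
      ∀ θ ∈ Icc (2*(π/2 + m*π) - (θ₀+6*π)) (θ₀+6*π), f θ = f (2*(π/2 + m*π) - θ) := by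
    intro m hcl hcu
    have hsub : Icc (2*(π/2 + m*π) - (θ₀+6*π)) (θ₀+6*π) ⊆ Icc (θ₀-6*π) (θ₀+6*π) :=
      Icc_subset_Icc (by linarith) le_rfl
    have hmapsTo : ∀ θ ∈ Icc (2*(π/2 + m*π) - (θ₀+6*π)) (θ₀+6*π),
        2*(π/2 + m*π) - θ ∈ Icc (2*(π/2 + m*π) - (θ₀+6*π)) (θ₀+6*π) := by
      intro θ hθ
      exact ⟨by linarith [hθ.2], by linarith [hθ.1]⟩
    have hgcont : ContinuousOn (fun θ => f (2*(π/2 + (m:ℝ)*π) - θ))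
        (Icc (2*(π/2 + (m:ℝ)*π) - (θ₀+6*π)) (θ₀+6*π)) :=
      (hfc.mono hsub).comp (Continuous.continuousOn (by continuity))
        (fun θ hθ => hmapsTo θ hθ)
    have hgderiv : ∀ t ∈ Ioo (2*(π/2 + (m:ℝ)*π) - (θ₀+6*π)) (θ₀+6*π),
        HasDerivAt (fun θ => f (2*(π/2 + (m:ℝ)*π) - θ))
          (Ff ω k e t (f (2*(π/2 + (m:ℝ)*π) - t))) t := by
      intro t ht
      have h2ct : 2*(π/2 + (m:ℝ)*π) - t ∈ Ioo (θ₀-6*π) (θ₀+6*π) :=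
        ⟨by linarith [ht.2], by linarith [ht.1]⟩
      have hD := hfd _ h2ct
      have hinner : HasDerivAt (fun θ : ℝ => 2*(π/2 + (m:ℝ)*π) - θ) (-1) t := by
        simpa using (hasDerivAt_id t).const_sub (2*(π/2 + (m:ℝ)*π))
      have hcomp := HasDerivAt.comp t hD hinner
      have hval : Ff ω k e (2*(π/2 + (m:ℝ)*π) - t) (f (2*(π/2 + (m:ℝ)*π) - t)) * (-1)
          = Ff ω k e t (f (2*(π/2 + (m:ℝ)*π) - t)) := by
        rw [Ff_reflect]; ring
      rw [hval] at hcomp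
      exact hcomp
    have hgmem : ∀ t ∈ Ioo (2*(π/2 + (m:ℝ)*π) - (θ₀+6*π)) (θ₀+6*π),
        f (2*(π/2 + (m:ℝ)*π) - t) ∈ Metric.closedBall r₀ (r₀/2) := fun t ht =>
      hmem _ (hsub (hmapsTo t (Ioo_subset_Icc_self ht)))
    have heqc : f (π/2 + (m:ℝ)*π) = f (2*(π/2 + (m:ℝ)*π) - (π/2 + (m:ℝ)*π)) := by
      rw [show 2*(π/2 + (m:ℝ)*π) - (π/2 + (m:ℝ)*π) = π/2 + (m:ℝ)*π from by ring]
    have key := ODE_solution_unique_of_mem_Icc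
      (v := fun t x => Ff ω k e t x) (s := fun _ => Metric.closedBall r₀ (r₀/2))
      (K := L) (f := f) (g := fun θ => f (2*(π/2 + (m:ℝ)*π) - θ)) (t₀ := π/2 + m*π)
      (a := 2*(π/2 + (m:ℝ)*π) - (θ₀+6*π)) (b := θ₀+6*π)
      (fun t _ => hL t)
      ⟨by linarith, by linarith⟩
      (hfc.mono hsub)
      (fun t ht => hfd t ⟨by linarith [ht.1], ht.2⟩)
      (fun t ht => hmem t (hsub (Ioo_subset_Icc_self ht)))
      hgcont hgderiv hgmem heqc
    exact fun θ hθ => key hθ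
  -- choice of the reflection centers
  have hπ0 : (0:ℝ) < π := by linarith
  set m : ℤ := ⌈(θ₀ - π/2)/π⌉ with hm
  have hcl : θ₀ ≤ π/2 + m*π := by
    have h1 := Int.le_ceil ((θ₀ - π/2)/π)
    rw [div_le_iff₀ hπ0] at h1
    linarith
  have hcu : π/2 + m*π ≤ θ₀ + π := by
    have h1 := Int.ceil_lt_add_one ((θ₀ - π/2)/π)
    have h2 : ((m:ℝ)) - 1 < (θ₀ - π/2)/π := by
      have h2' : ((m:ℝ)) < (θ₀ - π/2)/π + 1 := by exact_mod_cast h1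
      linarith
    have h3 := (lt_div_iff₀ hπ0).mp h2
    nlinarith [h3]
  have refl1 := reflect m hcl (by linarith)
  have refl2 : ∀ θ ∈ Icc (2*(π/2 + m*π + π) - (θ₀+6*π)) (θ₀+6*π),
      f θ = f (2*(π/2 + m*π + π) - θ) := by
    have h0 := reflect (m+1) (by push_cast; linarith) (by push_cast; linarith)
    push_cast at h0
    rw [show π/2 + ((m:ℝ)+1)*π = π/2 + (m:ℝ)*π + π from by ring] at h0
    exact h0
  -- 2π-periodicity of f on the central window
  have hper : ∀ θ ∈ Icc (θ₀ - 4*π) (θ₀ + 4*π), f (θ + 2*π) = f θ := by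
    intro θ hθ
    have h1 : f (2*(π/2 + m*π) - θ) = f (2*(π/2 + m*π + π) - (2*(π/2 + m*π) - θ)) := by
      apply refl2
      exact ⟨by linarith [hθ.2], by linarith [hθ.1]⟩
    have h2 : f θ = f (2*(π/2 + m*π) - θ) := by
      apply refl1
      exact ⟨by linarith [hθ.1], by linarith [hθ.2]⟩
    have h3 : 2*(π/2 + (m:ℝ)*π + π) - (2*(π/2 + (m:ℝ)*π) - θ) = θ + 2*π := by ring
    rw [h3] at h1
    rw [h2, ← h1]
  -- periodic extension
  have h2π : (0:ℝ) < 2*π := by linarith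
  set nn : ℝ → ℤ := fun θ => ⌊(θ - θ₀ + π)/(2*π)⌋ with hnn
  have harg : ∀ θ : ℝ, θ₀ - π ≤ θ - nn θ * (2*π) ∧ θ - nn θ * (2*π) < θ₀ + π := by
    intro θ
    constructor
    · have h1 := (le_div_iff₀ h2π).mp (Int.floor_le ((θ - θ₀ + π)/(2*π)))
      simp only [hnn]
      nlinarith
    · have h1 := (div_lt_iff₀ h2π).mp (Int.lt_floor_add_one ((θ - θ₀ + π)/(2*π)))
      simp only [hnn]
      push_cast at h1 ⊢
      nlinarith
  have hargIcc : ∀ θ : ℝ, θ - nn θ * (2*π) ∈ Icc (θ₀-6*π) (θ₀+6*π) := by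
    intro θ
    obtain ⟨h1, h2⟩ := harg θ
    exact ⟨by linarith, by linarith⟩
  have hargIoo : ∀ θ : ℝ, θ - nn θ * (2*π) ∈ Ioo (θ₀-6*π) (θ₀+6*π) := by
    intro θ
    obtain ⟨h1, h2⟩ := harg θ
    exact ⟨by linarith, by linarith⟩
  set rh : ℝ → ℝ := fun θ => f (θ - nn θ * (2*π)) with hrh
  have hlocal : ∀ θs θ : ℝ, |θ - θs| < 1 → rh θ = f (θ - nn θs * (2*π)) := by
    intro θs θ hclose
    obtain ⟨hx1, hx2⟩ := harg θ
    obtain ⟨hs1, hs2⟩ := harg θs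
    have habs := abs_lt.mp hclose
    have hΔbound : |((nn θ : ℝ) - nn θs) * (2*π)| < 2*π + 1 := by
      have heq : ((nn θ : ℝ) - nn θs) * (2*π)
          = ((θs - nn θs * (2*π)) + (θ - θs)) - (θ - nn θ * (2*π)) := by ring
      rw [heq, abs_lt]
      constructor <;> linarith
    have hΔint : nn θ - nn θs = -1 ∨ nn θ - nn θs = 0 ∨ nn θ - nn θs = 1 := by
      have h1 : |nn θ - nn θs| ≤ 1 := by
        by_contra hcc
        push_neg at hcc
        have h2 : (2:ℤ) ≤ |nn θ - nn θs| := hcc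
        have h3 : (2:ℝ) ≤ |((nn θ : ℝ) - nn θs)| := by
          have h4 : ((2:ℤ):ℝ) ≤ ((|nn θ - nn θs| : ℤ) : ℝ) := by exact_mod_cast h2
          push_cast at h4
          linarith
        rw [abs_mul, abs_of_pos h2π] at hΔbound
        nlinarith
      rcases abs_le.mp h1 with ⟨hl, hr⟩
      omega
    rcases hΔint with h | h | h
    · have hss : nn θs = nn θ + 1 := by omega
      rw [hrh]
      have hmem4 : θ - nn θ * (2*π) - 2*π ∈ Icc (θ₀ - 4*π) (θ₀ + 4*π) :=
        ⟨by linarith, by linarith⟩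
      have := hper _ hmem4
      rw [show θ - (nn θ:ℝ) * (2*π) - 2*π + 2*π = θ - nn θ * (2*π) from by ring] at this
      rw [hss]
      push_cast
      rw [show θ - ((nn θ:ℝ) + 1) * (2*π) = θ - (nn θ:ℝ) * (2*π) - 2*π from by ring]
      exact this
    · have hss : nn θs = nn θ := by omega
      rw [hrh, hss]
    · have hss : nn θs = nn θ - 1 := by omega
      rw [hrh]
      have hmem4 : θ - nn θ * (2*π) ∈ Icc (θ₀ - 4*π) (θ₀ + 4*π) :=
        ⟨by linarith, by linarith⟩
      have := hper _ hmem4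
      rw [hss]
      push_cast
      rw [show θ - ((nn θ:ℝ) - 1) * (2*π) = θ - (nn θ:ℝ) * (2*π) + 2*π from by ring]
      exact this.symm
  refine ⟨rh, ?_, ?_, ?_, ?_⟩
  · -- rh θ₀ = r₀
    have h0 : nn θ₀ = 0 := by
      simp only [hnn]
      rw [show (θ₀ - θ₀ + π)/(2*π) = 1/2 from by field_simp; ring]
      norm_num
    rw [hrh]
    simp only [h0]
    norm_num
    exact hf0
  · -- membership
    intro θ
    exact hmem _ (hargIcc θ)
  · -- derivative
    intro θs
    have hD := hfd _ (hargIoo θs)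
    have hinner : HasDerivAt (fun θ : ℝ => θ - nn θs * (2*π)) 1 θs := by
      simpa using (hasDerivAt_id θs).sub_const ((nn θs : ℝ) * (2*π))
    have hcomp := HasDerivAt.comp θs hD hinner
    simp only [mul_one] at hcomp
    have hval : Ff ω k e (θs - nn θs * (2*π)) (f (θs - nn θs * (2*π)))
        = Ff ω k e θs (rh θs) := by
      have h1 : θs = (θs - nn θs * (2*π)) + nn θs * (2*π) := by ring
      have h2 := Ff_shift ω k e (nn θs) (θs - nn θs * (2*π)) (f (θs - nn θs * (2*π)))
      rw [← h1] at h2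
      rw [h2]
    rw [hval] at hcomp
    apply hcomp.congr_of_eventuallyEq
    have hball : Metric.ball θs 1 ∈ nhds θs := Metric.ball_mem_nhds _ one_pos
    apply Filter.eventuallyEq_of_mem hball
    intro θ hθ
    rw [Metric.mem_ball, Real.dist_eq] at hθ
    exact hlocal θs θ hθ
  · -- periodicity
    intro θ
    have h1 : nn (θ + 2*π) = nn θ + 1 := by
      simp only [hnn]
      rw [show (θ + 2*π - θ₀ + π)/(2*π) = (θ - θ₀ + π)/(2*π) + 1 from by field_simp; ring]
      exact Int.floor_add_one _
    rw [hrh]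
    simp only [h1]
    push_cast
    rw [show θ + 2*π - ((nn θ:ℝ) + 1) * (2*π) = θ - (nn θ:ℝ) * (2*π) from by ring]


/-- The reduced planar system has a periodic orbit through every small point. -/
theorem reduced (hω : 0 < ω) (θ₀ : ℝ) (hr₀ : 0 < r₀) (h23 : r₀ ≤ 2/3)
    (hsm : 108*π*(|k|+|e|+1)*r₀ ≤ ω) :
    ∃ (Y U : ℝ → ℝ) (T : ℝ), 0 < T ∧
      Y 0 = r₀ * Real.cos θ₀ ∧ U 0 = ω * (r₀ * Real.sin θ₀) ∧
      (∀ t, HasDerivAt Y (-U t) t) ∧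
      (∀ t, HasDerivAt U (k * Y t * U t + ω^2 * Y t + e * ω * Y t^3) t) ∧
      Y T = Y 0 ∧ U T = U 0 ∧ ∃ t', (Y t', U t') ≠ (Y 0, U 0) := by
  have hπ := Real.pi_gt_three
  obtain ⟨rh, hrh0, hrhmem, hrhd, hrhper⟩ := exists_rh hω hr₀ h23 hsm θ₀
  have hrhcont : Continuous rh := by
    refine continuous_iff_continuousAt.mpr fun θ => (hrhd θ).differentiableAt.continuousAt
  set Dh : ℝ → ℝ := fun θ => Df ω k e θ (rh θ) with hDh
  have hDhlb : ∀ θ, ω/2 ≤ Dh θ := fun θ => (Df_bounds hω hr₀ h23 hsm θ (hrhmem θ)).1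
  have hDhub : ∀ θ, Dh θ ≤ 2*ω := fun θ => (Df_bounds hω hr₀ h23 hsm θ (hrhmem θ)).2
  have hDhpos : ∀ θ, 0 < Dh θ := fun θ => lt_of_lt_of_le (by linarith) (hDhlb θ)
  have hDhne : ∀ θ, Dh θ ≠ 0 := fun θ => ne_of_gt (hDhpos θ)
  have hDhcont : Continuous Dh :=
    contDiff_Df.continuous.comp (continuous_id.prodMk hrhcont)
  set g : ℝ → ℝ := fun θ => (Dh θ)⁻¹ with hg
  have hgcont : Continuous g := hDhcont.inv₀ hDhne
  have hgpos : ∀ θ, 0 < g θ := fun θ => inv_pos.mpr (hDhpos θ)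
  set τ : ℝ → ℝ := fun θ => ∫ s in θ₀..θ, g s with hτ
  have hτd : ∀ θ, HasDerivAt τ (g θ) θ := fun θ =>
    (hgcont.integral_hasStrictDerivAt θ₀ θ).hasDerivAt
  have hτmono : StrictMono τ := strictMono_of_hasDerivAt_pos hτd hgpos
  have hτ0 : τ θ₀ = 0 := intervalIntegral.integral_same
  -- periodicity of the integrand
  have hgper : Function.Periodic g (2*π) := by
    intro θ
    simp only [hg, hDh]
    have h1 : Df ω k e (θ + 2*π) (rh (θ + 2*π)) = Df ω k e θ (rh θ) := by
      rw [hrhper]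
      unfold Df
      rw [Real.cos_add_two_pi, Real.sin_add_two_pi]
    rw [h1]
  set T : ℝ := τ (θ₀ + 2*π) with hT
  have hτshift : ∀ θ, τ (θ + 2*π) = τ θ + T := by
    intro θ
    have h1 : τ θ + ∫ s in θ..θ+2*π, g s = τ (θ + 2*π) :=
      intervalIntegral.integral_add_adjacent_intervals
        (hgcont.intervalIntegrable _ _) (hgcont.intervalIntegrable _ _)
    have h2 : ∫ s in θ..θ+2*π, g s = ∫ s in θ₀..θ₀+2*π, g s :=
      hgper.intervalIntegral_add_eq θ θ₀
    rw [← h1, h2]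
  have hTpos : 0 < T := by
    have h1 : ∫ s in θ₀..θ₀+2*π, (2*ω)⁻¹ ≤ ∫ s in θ₀..θ₀+2*π, g s := by
      apply intervalIntegral.integral_mono_on (by linarith)
        (intervalIntegrable_const) (hgcont.intervalIntegrable _ _)
      intro x _
      rw [hg]
      exact inv_anti₀ (hDhpos x) (hDhub x)
    rw [intervalIntegral.integral_const] at h1
    have h2 : (θ₀ + 2*π - θ₀) • (2*ω)⁻¹ = 2*π/(2*ω) := by
      rw [smul_eq_mul]; ring
    rw [h2] at h1
    have : 0 < 2*π/(2*ω) := by positivity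
    rw [hT]
    linarith
  have hiterp : ∀ n : ℕ, τ (θ₀ + n*(2*π)) = n*T := by
    intro n
    induction n with
    | zero => simpa using hτ0
    | succ n ih =>
      have : θ₀ + (n+1 : ℕ)*(2*π) = (θ₀ + n*(2*π)) + 2*π := by push_cast; ring
      rw [this, hτshift, ih]
      push_cast; ring
  have hitern : ∀ n : ℕ, τ (θ₀ - n*(2*π)) = -(n*T) := by
    intro n
    induction n with
    | zero => simpa using hτ0
    | succ n ih =>
      have h1 := hτshift (θ₀ - (n+1 : ℕ)*(2*π))
      have h2 : θ₀ - (n+1 : ℕ)*(2*π) + 2*π = θ₀ - n*(2*π) := by push_cast; ring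
      rw [h2, ih] at h1
      push_cast
      push_cast at h1
      linarith
  have hτsurj : Function.Surjective τ := by
    intro y
    obtain ⟨n, hn⟩ := exists_nat_ge (|y|/T)
    have hnT : |y| ≤ n*T := by
      rw [div_le_iff₀ hTpos] at hn
      linarith
    have habs := abs_le.mp hnT
    have hlo : θ₀ - n*(2*π) ≤ θ₀ + n*(2*π) := by
      have : (0:ℝ) ≤ n*(2*π) := by positivity
      linarith
    have hcont : ContinuousOn τ (Icc (θ₀ - n*(2*π)) (θ₀ + n*(2*π))) :=
      (continuous_iff_continuousAt.mpr fun θ => (hτd θ).differentiableAt.continuousAt).continuousOn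
    have hIVT := intermediate_value_Icc hlo hcont
    have hy : y ∈ Icc (τ (θ₀ - n*(2*π))) (τ (θ₀ + n*(2*π))) := by
      rw [hiterp, hitern]
      exact ⟨by linarith [habs.1], by linarith [habs.2]⟩
    obtain ⟨x, _, hx⟩ := hIVT hy
    exact ⟨x, hx⟩
  set E := StrictMono.orderIsoOfSurjective τ hτmono hτsurj with hE
  have hEτ : ∀ θ, E θ = τ θ := fun θ =>
    congrFun (StrictMono.coe_orderIsoOfSurjective τ hτmono hτsurj) θ
  set ih : ℝ → ℝ := fun t => E.symm t with hih
  have hτih : ∀ t, τ (ih t) = t := by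
    intro t
    rw [← hEτ]
    exact E.apply_symm_apply t
  have hihτ : ∀ θ, ih (τ θ) = θ := by
    intro θ
    apply hτmono.injective
    rw [hτih]
  have hihcont : Continuous ih := (OrderIso.continuous E.symm)
  have hihd : ∀ t, HasDerivAt ih (Dh (ih t)) t := by
    intro t
    have h1 := HasDerivAt.of_local_left_inverse (hihcont.continuousAt)
      (hτd (ih t)) (ne_of_gt (hgpos (ih t))) (Filter.Eventually.of_forall (fun y => hτih y))
    rw [hg] at h1
    rwa [inv_inv] at h1
  have hih0 : ih 0 = θ₀ := by rw [← hτ0]; exact hihτ θ₀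
  have hihshift : ∀ t, ih (t + T) = ih t + 2*π := by
    intro t
    apply hτmono.injective
    rw [hτih, hτshift, hτih]
  set R : ℝ → ℝ := fun t => rh (ih t) with hR
  set Y : ℝ → ℝ := fun t => R t * Real.cos (ih t) with hY
  set U : ℝ → ℝ := fun t => ω * (R t * Real.sin (ih t)) with hU
  have hRd : ∀ t, HasDerivAt R (Nf k e (ih t) (rh (ih t))) t := by
    intro t
    have h1 := HasDerivAt.comp t (hrhd (ih t)) (hihd t)
    have h2 : Ff ω k e (ih t) (rh (ih t)) * Dh (ih t) = Nf k e (ih t) (rh (ih t)) := by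
      rw [Ff]
      exact div_mul_cancel₀ _ (hDhne (ih t))
    rw [h2] at h1
    exact h1
  have hcosd : ∀ t, HasDerivAt (fun s => Real.cos (ih s)) (-Real.sin (ih t) * Dh (ih t)) t :=
    fun t => HasDerivAt.comp t (Real.hasDerivAt_cos (ih t)) (hihd t)
  have hsind : ∀ t, HasDerivAt (fun s => Real.sin (ih s)) (Real.cos (ih t) * Dh (ih t)) t :=
    fun t => HasDerivAt.comp t (Real.hasDerivAt_sin (ih t)) (hihd t)
  have hYd : ∀ t, HasDerivAt Y (-U t) t := by
    intro t
    have h1 := (hRd t).mul (hcosd t)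
    have h2 : Nf k e (ih t) (rh (ih t)) * Real.cos (ih t)
        + R t * (-Real.sin (ih t) * Dh (ih t)) = -U t := by
      simp only [hR, hU, hDh]
      unfold Nf Df
      ring
    rw [h2] at h1
    exact h1
  have hUd : ∀ t, HasDerivAt U (k * Y t * U t + ω^2 * Y t + e * ω * Y t^3) t := by
    intro t
    have h1 := ((hRd t).mul (hsind t)).const_mul ω
    have hcs := Real.sin_sq_add_cos_sq (ih t)
    have h2 : ω * (Nf k e (ih t) (rh (ih t)) * Real.sin (ih t)
        + R t * (Real.cos (ih t) * Dh (ih t)))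
        = k * Y t * U t + ω^2 * Y t + e * ω * Y t^3 := by
      simp only [hR, hU, hY, hDh]
      unfold Nf Df
      linear_combination (ω*k*(rh (ih t))^2*Real.cos (ih t)*Real.sin (ih t)
        + ω*e*(rh (ih t))^3*(Real.cos (ih t))^3) * hcs
    rw [h2] at h1
    exact h1
  have hihT : ih T = θ₀ + 2*π := by
    have h1 := hihshift 0
    rw [zero_add] at h1
    rw [h1, hih0]
  refine ⟨Y, U, T, hTpos, ?_, ?_, hYd, hUd, ?_, ?_, ?_⟩
  · simp only [hY, hR, hih0, hrh0]
  · simp only [hU, hR, hih0, hrh0]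
  · simp only [hY, hR, hihT, hih0, hrhper, Real.cos_add_two_pi]
  · simp only [hU, hR, hihT, hih0, hrhper, Real.sin_add_two_pi]
  · -- the orbit is not constant
    refine ⟨τ (θ₀ + π), ?_⟩
    have h1 : ih (τ (θ₀ + π)) = θ₀ + π := hihτ _
    intro hEqn
    have hYe : Y (τ (θ₀ + π)) = Y 0 := congrArg Prod.fst hEqn
    have hUe : U (τ (θ₀ + π)) = U 0 := congrArg Prod.snd hEqn
    simp only [hY, hU, hR, h1, hih0, hrh0] at hYe hUe
    rw [Real.cos_add_pi] at hYe
    rw [Real.sin_add_pi] at hUe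
    have hρ : r₀/2 ≤ rh (θ₀ + π) := ((ball_mem_iff hr₀).mp (hrhmem _)).1
    have hsum : 0 < r₀ + rh (θ₀ + π) := by linarith
    have hprodc : (r₀ + rh (θ₀ + π)) * Real.cos θ₀ = 0 := by linear_combination - hYe
    have hUe2 : rh (θ₀ + π) * -Real.sin θ₀ = r₀ * Real.sin θ₀ :=
      mul_left_cancel₀ (ne_of_gt hω) hUe
    have hprods : (r₀ + rh (θ₀ + π)) * Real.sin θ₀ = 0 := by linear_combination - hUe2
    have hc0 : Real.cos θ₀ = 0 := by
      rcases mul_eq_zero.mp hprodc with h | h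
      · exact absurd h (ne_of_gt hsum)
      · exact h
    have hs0 : Real.sin θ₀ = 0 := by
      rcases mul_eq_zero.mp hprods with h | h
      · exact absurd h (ne_of_gt hsum)
      · exact h
    have hcs := Real.sin_sq_add_cos_sq θ₀
    rw [hc0, hs0] at hcs
    norm_num at hcs


theorem main (a0 a1 b1 b2 c1 c2 c3 : ℝ)
    (h1 : a0 = b1) (h2 : c1 - a0*b1 > 0) (h3 : c2 = a0*(a1 + b2)) :
    HasCenterAt (fun p : ℝ × ℝ =>
        ((c1*p.2 + c2*p.2^2 + c3*p.2^3) + (a0 + a1*p.2)*p.1,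
         -p.1 - (b1*p.2 + b2*p.2^2))) (0, 0) := by
  have hπ := Real.pi_gt_three
  set ω : ℝ := Real.sqrt (c1 - a0*b1) with hωdef
  have hω : 0 < ω := Real.sqrt_pos.mpr h2
  have hω2 : ω^2 = c1 - a0*b1 := Real.sq_sqrt (le_of_lt h2)
  set k : ℝ := a1 - 2*b2 with hk
  set e : ℝ := (c3 - a1*b2)/ω with he
  have heω : e*ω = c3 - a1*b2 := div_mul_cancel₀ _ (ne_of_gt hω)
  set B : ℝ := |k| + |e| + 1 with hB
  have hBpos : (0:ℝ) < B := by positivity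
  set rstar : ℝ := min (2/3) (ω/(108*π*B)) with hrstar
  have hrstarpos : 0 < rstar := by
    apply lt_min (by norm_num)
    positivity
  set M : ℝ := 1 + (1 + |b1| + |b2|)/ω with hM
  have hMpos : 0 < M := by positivity
  refine ⟨?_, min 1 (rstar/M), lt_min one_pos (div_pos hrstarpos hMpos), ?_⟩
  · show ((c1*(0:ℝ×ℝ).2 + c2*(0:ℝ×ℝ).2^2 + c3*(0:ℝ×ℝ).2^3) + (a0 + a1*(0:ℝ×ℝ).2)*(0:ℝ×ℝ).1,
      -(0:ℝ×ℝ).1 - (b1*(0:ℝ×ℝ).2 + b2*(0:ℝ×ℝ).2^2)) = (0 : ℝ × ℝ)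
    have hfst : (0:ℝ×ℝ).1 = (0:ℝ) := rfl
    have hsnd : (0:ℝ×ℝ).2 = (0:ℝ) := rfl
    rw [hfst, hsnd]
    norm_num
  intro z hz hznorm
  set ε : ℝ := min 1 (rstar/M) with hε
  set ξ₀ : ℝ := z.1 with hξ₀
  set y₀ : ℝ := z.2 with hy₀
  set u₀ : ℝ := ξ₀ + b1*y₀ + b2*y₀^2 with hu₀
  -- norm bounds
  have hz1 : |ξ₀| < ε := by
    have h := norm_fst_le (z - (0,0))
    have h2 : (z - (0,0)).1 = ξ₀ := by simp [hξ₀]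
    rw [h2, Real.norm_eq_abs] at h
    exact lt_of_le_of_lt h hznorm
  have hz2 : |y₀| < ε := by
    have h := norm_snd_le (z - (0,0))
    have h2 : (z - (0,0)).2 = y₀ := by simp [hy₀]
    rw [h2, Real.norm_eq_abs] at h
    exact lt_of_le_of_lt h hznorm
  have hε1 : ε ≤ 1 := min_le_left _ _
  have hε2 : ε ≤ rstar/M := min_le_right _ _
  have hεpos : 0 < ε := lt_min one_pos (div_pos hrstarpos hMpos)
  clear_value ω k e B rstar M ε
  -- polar data
  set w : ℂ := ⟨y₀, u₀/ω⟩ with hw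
  have hwne : w ≠ 0 := by
    intro hcon
    apply hz
    have hre : y₀ = 0 := congrArg Complex.re hcon
    have him : u₀/ω = 0 := congrArg Complex.im hcon
    have hu0 : u₀ = 0 := by
      rcases div_eq_zero_iff.mp him with h | h
      · exact h
      · exact absurd h hω.ne'
    have hξ0 : ξ₀ = 0 := by
      rw [hu₀, hre] at hu0
      simpa using hu0
    have hzeq : z = (ξ₀, y₀) := rfl
    rw [hzeq, hre, hξ0]
  set r₀ : ℝ := ‖w‖ with hr₀def
  have hr₀pos : 0 < r₀ := norm_pos_iff.mpr hwne
  set θz : ℝ := Complex.arg w with hθz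
  have hre0 : w.re = y₀ := rfl
  have him0 : w.im = u₀/ω := rfl
  have hcosz : r₀ * Real.cos θz = y₀ := by
    rw [hθz, Complex.cos_arg hwne]
    rw [hre0, ← hr₀def]
    field_simp
  have hsinz : ω * (r₀ * Real.sin θz) = u₀ := by
    rw [hθz, Complex.sin_arg]
    rw [him0, ← hr₀def]
    field_simp
  -- smallness of r₀
  have hu₀bound : |u₀| ≤ ε * (1 + |b1| + |b2|) := by
    have ht1 : |u₀| ≤ |ξ₀| + |b1| * |y₀| + |b2| * |y₀|^2 := by
      rw [hu₀]
      calc |ξ₀ + b1*y₀ + b2*y₀^2| ≤ |ξ₀ + b1*y₀| + |b2*y₀^2| := abs_add_le _ _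
        _ ≤ |ξ₀| + |b1*y₀| + |b2*y₀^2| := by linarith [abs_add_le ξ₀ (b1*y₀)]
        _ = |ξ₀| + |b1| * |y₀| + |b2| * |y₀|^2 := by rw [abs_mul, abs_mul, abs_pow]
    have hy1 : |y₀| ≤ ε := le_of_lt hz2
    have hy2 : |y₀|^2 ≤ ε := by nlinarith [abs_nonneg y₀]
    have hp1 : |b1| * |y₀| ≤ |b1| * ε := mul_le_mul_of_nonneg_left hy1 (abs_nonneg b1)
    have hp2 : |b2| * |y₀|^2 ≤ |b2| * ε := mul_le_mul_of_nonneg_left hy2 (abs_nonneg b2)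
    have hrng : ε*(1+|b1|+|b2|) = ε + |b1| * ε + |b2| * ε := by ring
    linarith [hz1.le]
  have hr₀small : r₀ ≤ rstar := by
    have habs := Complex.norm_le_abs_re_add_abs_im w
    rw [hre0, him0, ← hr₀def] at habs
    have himabs : |u₀/ω| = |u₀|/ω := by
      rw [abs_div, abs_of_pos hω]
    rw [himabs] at habs
    have hd : |u₀|/ω ≤ ε * (1 + |b1| + |b2|)/ω := (div_le_div_iff_of_pos_right hω).mpr hu₀bound
    have hεM : ε * M ≤ rstar := by
      have hh := (le_div_iff₀ hMpos).mp hε2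
      linarith
    have hεM2 : ε + ε*(1 + |b1| + |b2|)/ω = ε * M := by
      rw [hM]; field_simp
    calc r₀ ≤ |y₀| + |u₀|/ω := habs
      _ ≤ ε + ε * (1 + |b1| + |b2|)/ω := by linarith
      _ = ε * M := hεM2
      _ ≤ rstar := hεM
  have hr₀small' : r₀ ≤ min (2/3) (ω/(108*π*B)) := by rw [hrstar] at hr₀small; exact hr₀small
  have h23 : r₀ ≤ 2/3 := le_trans hr₀small' (min_le_left _ _)
  have hsm : 108*π*B*r₀ ≤ ω := by
    have h5 : r₀ ≤ ω/(108*π*B) := le_trans hr₀small' (min_le_right _ _)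
    have h6 : (0:ℝ) < 108*π*B := by positivity
    calc 108*π*B*r₀ ≤ 108*π*B*(ω/(108*π*B)) :=
          mul_le_mul_of_nonneg_left h5 (le_of_lt h6)
      _ = ω := by field_simp
  -- apply the reduced theorem
  have hsm' : 108*π*(|k|+|e|+1)*r₀ ≤ ω := by rw [← hB]; exact hsm
  obtain ⟨Y, U, T, hT, hY0, hU0, hYd, hUd, hYT, hUT, t', hnc⟩ :=
    reduced (k := k) (e := e) hω θz hr₀pos h23 hsm' 
  set γ : ℝ → ℝ × ℝ := fun t => (U t - b1*Y t - b2*(Y t)^2, Y t) with hγ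
  have hγ0 : γ 0 = z := by
    rw [hγ]
    have hYz : Y 0 = y₀ := by rw [hY0, hcosz]
    have hUz : U 0 = u₀ := by rw [hU0, hsinz]
    simp only [hYz, hUz]
    have hxx : u₀ - b1*y₀ - b2*y₀^2 = ξ₀ := by rw [hu₀]; ring
    rw [hxx]
  refine ⟨γ, T, hT, hγ0, ?_, ?_, ?_⟩
  · -- the ODE
    intro t
    have hstep1 := ((hUd t).sub ((hYd t).const_mul b1)).sub (((hYd t).pow 2).const_mul b2)
    have hpair := HasDerivAt.prodMk hstep1 (hYd t)
    convert hpair using 1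
    · rfl
    simp only [hγ]
    rw [Prod.ext_iff]
    constructor
    · show (c1*(Y t) + c2*(Y t)^2 + c3*(Y t)^3) + (a0 + a1*(Y t))*(U t - b1*Y t - b2*(Y t)^2)
        = (k * Y t * U t + ω^2 * Y t + e * ω * Y t^3) - b1 * (-U t) - b2 * (2 * Y t ^ (2-1) * (-U t))
      push_cast
      linear_combination (a1*(Y t)^2 + U t)*h1 + (Y t)^2*h3 - (Y t)*hω2 - (Y t)^3*heω
        - (Y t*U t)*hk
    · show -(U t - b1*Y t - b2*(Y t)^2) - (b1*(Y t) + b2*(Y t)^2) = -U t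
      ring
  · -- periodicity
    have hTeq : γ T = γ 0 := by simp only [hγ, hYT, hUT]
    rw [hTeq, hγ0]
  · -- nonconstancy
    refine ⟨t', 0, fun hcon => hnc ?_⟩
    have hY' : Y t' = Y 0 := congrArg Prod.snd hcon
    have hξ' : U t' - b1*Y t' - b2*(Y t')^2 = U 0 - b1*Y 0 - b2*(Y 0)^2 :=
      congrArg Prod.fst hcon
    have hU' : U t' = U 0 := by
      rw [hY'] at hξ'
      linarith
    rw [hY', hU']


end CenterPB

end

/-- Pull-back case: if `a₀ = b₁`, `c₁ - a₀ b₁ > 0` and `c₂ = a₀ (a₁ + b₂)`, then the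
Liénard-type vector field `Y` has a center at the origin. -/
theorem center_pullback_case (a0 a1 b1 b2 c1 c2 c3 : ℝ)
    (h1 : a0 = b1) (h2 : c1 - a0*b1 > 0) (h3 : c2 = a0*(a1 + b2)) :
    HasCenterAt (fun p : ℝ × ℝ =>
        ((c1*p.2 + c2*p.2^2 + c3*p.2^3) + (a0 + a1*p.2)*p.1,
         -p.1 - (b1*p.2 + b2*p.2^2))) (0, 0) :=
  CenterPB.main a0 a1 b1 b2 c1 c2 c3 h1 h2 h3
end

section
/- Assume b30 ≠ 1, 2 a20 b11 + 2 (1 - b30)(1 + a01 + a21) > 0, 2 a20 + b11 = 0 and a21 + b12 = 0 (the Hamiltonian case). Then X has a center at (1,0) and a center at (-1,0). -/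
open Real Filter Set intervalIntegral MeasureTheory
set_option maxHeartbeats 1000000


lemma reparam_periodic (X : ℝ × ℝ → ℝ × ℝ) (D : ℝ → ℝ × ℝ) (Λ : ℝ → ℝ)
    (hΛc : Continuous Λ) (hΛpos : ∀ θ, 0 < Λ θ) (hΛper : ∀ θ, Λ (θ + 2*π) = Λ θ)
    (hDper : ∀ θ, D (θ + 2*π) = D θ)
    (hD : ∀ θ, ∃ b : ℝ × ℝ, HasDerivAt D b θ ∧ X (D θ) = Λ θ • b) :
    ∃ (γ : ℝ → ℝ × ℝ) (T : ℝ), 0 < T ∧ γ 0 = D 0 ∧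
      (∀ t, HasDerivAt γ (X (γ t)) t) ∧ γ T = D 0 ∧ (∀ θ, ∃ t, γ t = D θ) := by
  set f : ℝ → ℝ := fun θ => (Λ θ)⁻¹ with hf
  have hfc : Continuous f := hΛc.inv₀ (fun θ => (hΛpos θ).ne')
  have hfpos : ∀ θ, 0 < f θ := fun θ => inv_pos.2 (hΛpos θ)
  have hfper : Function.Periodic f (2*π) := fun θ => by simp [hf, hΛper θ]
  set F : ℝ → ℝ := fun θ => ∫ s in (0:ℝ)..θ, f s with hFdef
  have hFd : ∀ θ, HasDerivAt F (f θ) θ := by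
    intro θ
    exact intervalIntegral.integral_hasDerivAt_right (hfc.intervalIntegrable 0 θ)
      (hfc.stronglyMeasurableAtFilter _ _) hfc.continuousAt
  have hFc : Continuous F :=
    continuous_iff_continuousAt.2 fun θ => (hFd θ).continuousAt
  have hFmono : StrictMono F :=
    strictMono_of_deriv_pos fun θ => by rw [(hFd θ).deriv]; exact hfpos θ
  have hF0 : F 0 = 0 := intervalIntegral.integral_same
  set T : ℝ := F (2*π) with hTdef
  have hTpos : 0 < T := by
    have := hFmono (show (0:ℝ) < 2*π by positivity)
    rwa [hF0] at this
  have hFadd : ∀ θ, F (θ + 2*π) = F θ + T := by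
    intro θ
    have h1 : (∫ s in (0:ℝ)..θ, f s) + (∫ s in θ..(θ+2*π), f s)
        = ∫ s in (0:ℝ)..(θ+2*π), f s :=
      intervalIntegral.integral_add_adjacent_intervals
        (hfc.intervalIntegrable _ _) (hfc.intervalIntegrable _ _)
    have h2 : (∫ s in θ..(θ+2*π), f s) = ∫ s in (0:ℝ)..(0+2*π), f s :=
      hfper.intervalIntegral_add_eq θ 0
    have : F (θ + 2*π) = F θ + ∫ s in θ..(θ+2*π), f s := by
      simp only [hFdef, ← h1]
    rw [this, h2]
    norm_num [hTdef, hFdef]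
  have hFaddn : ∀ n : ℕ, ∀ θ, F (θ + n * (2*π)) = F θ + n * T := by
    intro n
    induction n with
    | zero => simp
    | succ k ih =>
      intro θ
      have : θ + (k+1 : ℕ) * (2*π) = (θ + k * (2*π)) + 2*π := by push_cast; ring
      rw [this, hFadd, ih θ]
      push_cast; ring
  have htop : Tendsto F atTop atTop := by
    apply tendsto_atTop_atTop_of_monotone hFmono.monotone
    intro b
    obtain ⟨n, hn⟩ := exists_nat_ge (b / T)
    refine ⟨0 + n * (2*π), ?_⟩
    rw [hFaddn n 0, hF0, zero_add]
    calc b = (b / T) * T := by field_simp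
    _ ≤ n * T := by nlinarith [(div_le_iff₀ hTpos).mp (le_refl (b/T))]
  have hbot : Tendsto F atBot atBot := by
    apply tendsto_atBot_atBot_of_monotone hFmono.monotone
    intro b
    obtain ⟨n, hn⟩ := exists_nat_ge ((-b) / T)
    refine ⟨-(n * (2*π)), ?_⟩
    have := hFaddn n (-(n * (2*π)))
    simp only [neg_add_cancel, hF0] at this
    have hFneg : F (-(n * (2*π))) = -(n * T) := by linarith
    rw [hFneg]
    nlinarith [(div_le_iff₀ hTpos).mp hn]
  have hsurj : Function.Surjective F := hFc.surjective htop hbot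
  set φ := StrictMono.orderIsoOfSurjective F hFmono hsurj with hφ
  set g : ℝ → ℝ := fun t => φ.symm t with hg
  have hgF : ∀ θ, g (F θ) = θ := fun θ =>
    StrictMono.orderIsoOfSurjective_symm_apply_self F hFmono hsurj θ
  have hFg : ∀ t, F (g t) = t := fun t =>
    StrictMono.orderIsoOfSurjective_self_symm_apply F hFmono hsurj t
  have hgc : Continuous g := OrderIso.continuous φ.symm
  have hgd : ∀ t, HasDerivAt g (Λ (g t)) t := by
    intro t
    have h := HasDerivAt.of_local_left_inverse (a := t) hgc.continuousAt
      (hFd (g t)) (hfpos (g t)).ne'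
      (Filter.Eventually.of_forall hFg)
    simpa [hf, inv_inv] using h
  refine ⟨D ∘ g, T, hTpos, ?_, ?_, ?_, ?_⟩
  · have h0 : g 0 = 0 := by
      have := hgF 0
      rwa [hF0] at this
    simp [h0]
  · intro t
    obtain ⟨b, hb, hXb⟩ := hD (g t)
    have := HasDerivAt.scomp t hb (hgd t)
    simpa [Function.comp, hXb] using this
  · have : g T = 2*π := by rw [hTdef, hgF]
    simp only [Function.comp, this]
    have := hDper 0
    simpa using this
  · intro θ
    exact ⟨F θ, by simp [Function.comp, hgF]⟩

lemma planar_parallel {n a b : ℝ × ℝ} (hn : n ≠ 0)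
    (ha : n.1*a.1 + n.2*a.2 = 0) (hb : n.1*b.1 + n.2*b.2 = 0) (hbne : b ≠ 0) :
    ∃ μ : ℝ, a = μ • b := by
  have hn' : n.1 ≠ 0 ∨ n.2 ≠ 0 := by
    by_contra hc; push_neg at hc; exact hn (Prod.ext hc.1 hc.2)
  have hcross : a.1*b.2 - a.2*b.1 = 0 := by
    rcases hn' with h | h
    · have : n.1 * (a.1*b.2 - a.2*b.1) = 0 := by linear_combination b.2 * ha - a.2 * hb
      rcases mul_eq_zero.1 this with h' | h'; exact absurd h' h; exact h'
    · have : n.2 * (a.1*b.2 - a.2*b.1) = 0 := by linear_combination a.1 * hb - b.1 * ha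
      rcases mul_eq_zero.1 this with h' | h'; exact absurd h' h; exact h'
  have hb' : b.1 ≠ 0 ∨ b.2 ≠ 0 := by
    by_contra hc; push_neg at hc; exact hbne (Prod.ext hc.1 hc.2)
  rcases hb' with h | h
  · refine ⟨a.1 / b.1, Prod.ext ?_ ?_⟩
    · simp only [Prod.smul_fst, smul_eq_mul]; field_simp
    · simp only [Prod.smul_snd, smul_eq_mul]; field_simp; linear_combination -hcross
  · refine ⟨a.2 / b.2, Prod.ext ?_ ?_⟩
    · simp only [Prod.smul_fst, smul_eq_mul]; field_simp; linear_combination hcross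
    · simp only [Prod.smul_snd, smul_eq_mul]; field_simp

lemma rho_hasDeriv (h hx hy : ℝ × ℝ → ℝ) (p : ℝ × ℝ) (r c : ℝ) (ρ : ℝ → ℝ)
    (hCD : ContDiff ℝ 1 h)
    (hH : ∀ w : ℝ × ℝ, HasFDerivAt h
      (hx w • ContinuousLinearMap.fst ℝ ℝ ℝ + hy w • ContinuousLinearMap.snd ℝ ℝ ℝ) w)
    (hρspec : ∀ θ, ρ θ ∈ Set.Ioo 0 r ∧ h (p.1 + ρ θ * cos θ, p.2 + ρ θ * sin θ) = c)
    (hρuniq : ∀ θ s, s ∈ Set.Icc 0 r → h (p.1 + s * cos θ, p.2 + s * sin θ) = c → s = ρ θ)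
    (θ₁ : ℝ)
    (hgspos : 0 < hx (p.1 + ρ θ₁ * cos θ₁, p.2 + ρ θ₁ * sin θ₁) * cos θ₁
        + hy (p.1 + ρ θ₁ * cos θ₁, p.2 + ρ θ₁ * sin θ₁) * sin θ₁) :
    ∃ d : ℝ, HasDerivAt ρ d θ₁ := by
  set G : ℝ × ℝ → ℝ := fun q => h (p.1 + q.2 * Real.cos q.1, p.2 + q.2 * Real.sin q.1)
    with hGdef
  have hGCD : ContDiff ℝ 1 G := by
    apply hCD.comp
    have h1 : ContDiff ℝ 1 (fun q : ℝ × ℝ => Real.cos q.1) :=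
      Real.contDiff_cos.of_le le_top |>.comp contDiff_fst
    have h2 : ContDiff ℝ 1 (fun q : ℝ × ℝ => Real.sin q.1) :=
      Real.contDiff_sin.of_le le_top |>.comp contDiff_fst
    exact ((contDiff_const.add (contDiff_snd.mul h1)).prodMk
      (contDiff_const.add (contDiff_snd.mul h2)))
  set s₁ : ℝ := ρ θ₁ with hs₁def
  have hs₁ : s₁ ∈ Ioo 0 r := (hρspec θ₁).1
  set w₁ : ℝ × ℝ := (p.1 + s₁ * Real.cos θ₁, p.2 + s₁ * Real.sin θ₁) with hw₁def
  set gs : ℝ := hx w₁ * Real.cos θ₁ + hy w₁ * Real.sin θ₁ with hgsdef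
  set gθ : ℝ := hx w₁ * (-(s₁ * Real.sin θ₁)) + hy w₁ * (s₁ * Real.cos θ₁) with hgθdef
  set q₁ : ℝ × ℝ := (θ₁, s₁) with hq₁def
  set LG : (ℝ × ℝ) →L[ℝ] ℝ :=
    gθ • ContinuousLinearMap.fst ℝ ℝ ℝ + gs • ContinuousLinearMap.snd ℝ ℝ ℝ with hLGdef
  have hGfd : HasFDerivAt G LG q₁ := by
    have hcos : HasFDerivAt (fun q : ℝ × ℝ => Real.cos q.1)
        ((-Real.sin θ₁) • ContinuousLinearMap.fst ℝ ℝ ℝ) q₁ :=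
      by have := (Real.hasDerivAt_cos θ₁).comp_hasFDerivAt q₁
           (hasFDerivAt_fst (𝕜 := ℝ) (E := ℝ) (F := ℝ) (p := q₁)); exact this
    have hsin : HasFDerivAt (fun q : ℝ × ℝ => Real.sin q.1)
        ((Real.cos θ₁) • ContinuousLinearMap.fst ℝ ℝ ℝ) q₁ :=
      by have := (Real.hasDerivAt_sin θ₁).comp_hasFDerivAt q₁
           (hasFDerivAt_fst (𝕜 := ℝ) (E := ℝ) (F := ℝ) (p := q₁)); exact this
    have hm1 : HasFDerivAt (fun q : ℝ × ℝ => p.1 + q.2 * Real.cos q.1)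
        (s₁ • ((-Real.sin θ₁) • ContinuousLinearMap.fst ℝ ℝ ℝ)
          + (Real.cos θ₁) • ContinuousLinearMap.snd ℝ ℝ ℝ) q₁ := by
      have := (hasFDerivAt_snd (𝕜 := ℝ) (E := ℝ) (F := ℝ) (p := q₁)).mul hcos
      simpa [add_comm] using this.const_add p.1
    have hm2 : HasFDerivAt (fun q : ℝ × ℝ => p.2 + q.2 * Real.sin q.1)
        (s₁ • ((Real.cos θ₁) • ContinuousLinearMap.fst ℝ ℝ ℝ)
          + (Real.sin θ₁) • ContinuousLinearMap.snd ℝ ℝ ℝ) q₁ := by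
      have := (hasFDerivAt_snd (𝕜 := ℝ) (E := ℝ) (F := ℝ) (p := q₁)).mul hsin
      simpa [add_comm] using this.const_add p.2
    have hm := hm1.prodMk hm2
    have hcomp := (hH w₁).comp q₁ hm
    have hLeq : (hx w₁ • ContinuousLinearMap.fst ℝ ℝ ℝ
        + hy w₁ • ContinuousLinearMap.snd ℝ ℝ ℝ).comp
        ((s₁ • ((-Real.sin θ₁) • ContinuousLinearMap.fst ℝ ℝ ℝ)
          + (Real.cos θ₁) • ContinuousLinearMap.snd ℝ ℝ ℝ).prod
         (s₁ • ((Real.cos θ₁) • ContinuousLinearMap.fst ℝ ℝ ℝ)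
          + (Real.sin θ₁) • ContinuousLinearMap.snd ℝ ℝ ℝ)) = LG := by
      apply ContinuousLinearMap.ext
      intro v
      simp [hLGdef, hgsdef, hgθdef, ContinuousLinearMap.comp_apply,
        ContinuousLinearMap.prod_apply]
      ring
    rw [hLeq] at hcomp
    exact hcomp
  have hGstrict : HasStrictFDerivAt G LG q₁ :=
    (hGCD.contDiffAt).hasStrictFDerivAt' hGfd one_ne_zero
  set Φ : ℝ × ℝ → ℝ × ℝ := fun q => (q.1, G q) with hΦdef
  set A : (ℝ × ℝ) →L[ℝ] (ℝ × ℝ) := (ContinuousLinearMap.fst ℝ ℝ ℝ).prod LG with hAdef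
  set Ainv : (ℝ × ℝ) →L[ℝ] (ℝ × ℝ) := (ContinuousLinearMap.fst ℝ ℝ ℝ).prod
    (gs⁻¹ • (ContinuousLinearMap.snd ℝ ℝ ℝ - gθ • ContinuousLinearMap.fst ℝ ℝ ℝ))
    with hAinvdef
  have hleft : Function.LeftInverse Ainv A := by
    intro v
    simp only [hAdef, hAinvdef, hLGdef, ContinuousLinearMap.prod_apply,
      ContinuousLinearMap.add_apply, ContinuousLinearMap.smul_apply,
      ContinuousLinearMap.sub_apply, ContinuousLinearMap.coe_fst',
      ContinuousLinearMap.coe_snd', smul_eq_mul]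
    have : gs ≠ 0 := ne_of_gt hgspos
    refine Prod.ext rfl ?_
    simp only
    field_simp
    ring
  have hright : Function.RightInverse Ainv A := by
    intro v
    simp only [hAdef, hAinvdef, hLGdef, ContinuousLinearMap.prod_apply,
      ContinuousLinearMap.add_apply, ContinuousLinearMap.smul_apply,
      ContinuousLinearMap.sub_apply, ContinuousLinearMap.coe_fst',
      ContinuousLinearMap.coe_snd', smul_eq_mul]
    have : gs ≠ 0 := ne_of_gt hgspos
    refine Prod.ext rfl ?_
    simp only
    field_simp
    ring
  set E : (ℝ × ℝ) ≃L[ℝ] (ℝ × ℝ) := ContinuousLinearEquiv.equivOfInverse A Ainv hleft hright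
    with hEdef
  have hΦstrict : HasStrictFDerivAt Φ (E : (ℝ × ℝ) →L[ℝ] (ℝ × ℝ)) q₁ := by
    have hA : HasStrictFDerivAt Φ A q₁ := hasStrictFDerivAt_fst.prodMk hGstrict
    exact hA
  have hΦq₁ : Φ q₁ = (θ₁, c) := by
    have hc : G q₁ = c := (hρspec θ₁).2
    rw [hΦdef]
    exact Prod.ext rfl hc
  set Ψ : ℝ × ℝ → ℝ × ℝ := hΦstrict.localInverse Φ _ _ with hΨdef
  have hΨq : Ψ (θ₁, c) = q₁ := by
    rw [← hΦq₁, hΨdef]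
    exact hΦstrict.localInverse_apply_image
  have hΨcont : ContinuousAt Ψ (θ₁, c) := by
    rw [← hΦq₁]
    exact hΦstrict.localInverse_continuousAt
  have hΨstrict : HasStrictFDerivAt Ψ (E.symm : (ℝ × ℝ) →L[ℝ] (ℝ × ℝ)) (θ₁, c) := by
    rw [← hΦq₁]
    exact hΦstrict.to_localInverse
  have hevr : ∀ᶠ y in nhds (θ₁, c), Φ (Ψ y) = y := by
    rw [← hΦq₁]
    exact hΦstrict.eventually_right_inverse
  -- the local implicit function
  set ψ : ℝ → ℝ := fun θ => (Ψ (θ, c)).2 with hψdef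
  have hlc : ContinuousAt (fun θ : ℝ => ((θ, c) : ℝ × ℝ)) θ₁ :=
    (continuous_id.prodMk continuous_const).continuousAt
  have hev1 : ∀ᶠ θ in nhds θ₁, Φ (Ψ (θ, c)) = (θ, c) := by
    have := hlc.tendsto.eventually hevr
    simpa using this
  have hψcont : ContinuousAt ψ θ₁ := by
    have h1 := ContinuousAt.comp (x := θ₁) (g := Ψ) (f := fun θ : ℝ => ((θ, c) : ℝ × ℝ))
      hΨcont hlc
    exact (continuous_snd.continuousAt).comp h1
  have hψs₁ : ψ θ₁ = s₁ := by rw [hψdef]; simp only [hΨq, hq₁def]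
  have hev2 : ∀ᶠ θ in nhds θ₁, ψ θ ∈ Ioo 0 r := by
    apply hψcont.eventually_mem
    rw [hψs₁]
    exact isOpen_Ioo.mem_nhds hs₁
  have hevEq : ψ =ᶠ[nhds θ₁] ρ := by
    filter_upwards [hev1, hev2] with θ h1 h2
    have hfst : (Ψ (θ, c)).1 = θ := congrArg Prod.fst h1
    have hsnd : G (Ψ (θ, c)) = c := congrArg Prod.snd h1
    have : h (p.1 + ψ θ * Real.cos θ, p.2 + ψ θ * Real.sin θ) = c := by
      rw [← hsnd, hGdef]
      simp only [hψdef, hfst]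
    exact hρuniq θ (ψ θ) (Ioo_subset_Icc_self h2) this
  -- transfer the derivative from ψ to ρ
  have hlined : HasDerivAt (fun θ : ℝ => ((θ, c) : ℝ × ℝ)) ((1, 0) : ℝ × ℝ) θ₁ :=
    (hasDerivAt_id θ₁).prodMk (hasDerivAt_const θ₁ c)
  have hΨd : HasDerivAt (fun θ : ℝ => Ψ (θ, c)) ((E.symm : (ℝ×ℝ) →L[ℝ] (ℝ×ℝ)) (1, 0)) θ₁ :=
    (hΨstrict.hasFDerivAt).comp_hasDerivAt θ₁ hlined
  have hψd : HasDerivAt ψ ((E.symm : (ℝ×ℝ) →L[ℝ] (ℝ×ℝ)) ((1:ℝ), (0:ℝ))).2 θ₁ :=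
    ((ContinuousLinearMap.snd ℝ ℝ ℝ).hasFDerivAt).comp_hasDerivAt θ₁ hΨd
  exact ⟨_, (Filter.EventuallyEq.hasDerivAt_iff hevEq).1 hψd⟩

lemma hG_estimate (σ ε A a01 a20 a21 a02 a03 : ℝ)
    (hσ : σ = 1 ∨ σ = -1) (hε : ε = 1 ∨ ε = -1)
    (hA : 0 < σ * A) (hB : 0 < σ * (1 + a01 + a21))
    (hdet : 0 < 2*A*(1+a01+a21) - 4*a20^2) :
    ∃ r : ℝ, 0 < r ∧ ∀ u v : ℝ, 0 < u^2+v^2 → u^2+v^2 ≤ r^2 →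
      0 < (σ*(2*a20*(ε+u)*v + a21*(ε+u)*v^2 - A*((ε+u) - (ε+u)^3)))*u
        + (σ*((1+a01)*v + a21*(ε+u)^2*v + a20*((ε+u)^2-1) + a02*v^2 + a03*v^3))*v := by
  have hσ2 : σ^2 = 1 := by rcases hσ with rfl|rfl <;> norm_num
  have hε2 : ε^2 = 1 := by rcases hε with rfl|rfl <;> norm_num
  have hσa : |σ| = 1 := by rcases hσ with rfl|rfl <;> norm_num
  have hεa : |ε| = 1 := by rcases hε with rfl|rfl <;> norm_num
  have hα : 0 < 2*(σ*A) := by linarith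
  have hδ : 0 < σ*(1+a01+a21) := hB
  obtain ⟨C, hCdef⟩ : ∃ C : ℝ,
      C = 3*|a20| + 3*|a21| + 2*|a21| + 3*|A| + |A| + |a02| + |a03| := ⟨_, rfl⟩
  have hC : 0 ≤ C := by rw [hCdef]; positivity
  obtain ⟨dd, hdddef⟩ : ∃ dd : ℝ, dd = 2*A*(1+a01+a21) - 4*a20^2 := ⟨_, rfl⟩
  have hdet' : 0 < dd := by rw [hdddef]; exact hdet
  have hαδβ : (2*(σ*A)) * (σ*(1+a01+a21)) - (2*σ*a20*ε)^2 = dd := by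
    rw [hdddef]
    linear_combination (2*A*(1+a01+a21) - 4*a20^2*ε^2) * hσ2 + (-(4*a20^2)) * hε2
  obtain ⟨Sm, hSmdef⟩ : ∃ Sm : ℝ, Sm = 2*(σ*A) + σ*(1+a01+a21) := ⟨_, rfl⟩
  have hSm : 0 < Sm := by rw [hSmdef]; linarith
  have hden : (0:ℝ) < 2*(C+1)*Sm := by nlinarith [hC, hSm]
  obtain ⟨r, hrdef⟩ : ∃ r : ℝ, r = min 1 (dd/(2*(C+1)*Sm)) := ⟨_, rfl⟩
  have hr0 : 0 < r := by
    rw [hrdef]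
    exact lt_min one_pos (div_pos hdet' hden)
  have hr1 : r ≤ 1 := by rw [hrdef]; exact min_le_left _ _
  have hrC : Sm * ((C+1) * r) ≤ dd / 2 := by
    have h1 : r ≤ dd / (2*(C+1)*Sm) := by rw [hrdef]; exact min_le_right _ _
    rw [le_div_iff₀ hden] at h1
    have h2 : Sm * ((C+1) * r) * 2 = r * (2*(C+1)*Sm) := by ring
    linarith
  refine ⟨r, hr0, ?_⟩
  intro u v hpos hle
  have hu2 : u^2 ≤ u^2+v^2 := by nlinarith [sq_nonneg v]
  have hv2 : v^2 ≤ u^2+v^2 := by nlinarith [sq_nonneg u]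
  have hur2 : u^2 ≤ r^2 := le_trans hu2 hle
  have hvr2 : v^2 ≤ r^2 := le_trans hv2 hle
  have hu : |u| ≤ r := by nlinarith [sq_abs u, abs_nonneg u, sq_nonneg (|u| - r), hur2, hr0]
  have hv : |v| ≤ r := by nlinarith [sq_abs v, abs_nonneg v, sq_nonneg (|v| - r), hvr2, hr0]
  have hrr : r^2 ≤ r := by nlinarith [hr0, hr1]
  have habs2u : |u^2| = u^2 := abs_of_nonneg (sq_nonneg u)
  have habs2v : |v^2| = v^2 := abs_of_nonneg (sq_nonneg v)
  have hm1 : |u^2*v| ≤ r*(u^2+v^2) := by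
    rw [abs_mul, habs2u]
    calc u^2 * |v| ≤ u^2 * r := mul_le_mul_of_nonneg_left hv (sq_nonneg u)
    _ = r * u^2 := mul_comm _ _
    _ ≤ r * (u^2+v^2) := mul_le_mul_of_nonneg_left hu2 hr0.le
  have hm2 : |u*v^2| ≤ r*(u^2+v^2) := by
    rw [abs_mul, habs2v]
    calc |u| * v^2 ≤ r * v^2 := mul_le_mul_of_nonneg_right hu (sq_nonneg v)
    _ ≤ r * (u^2+v^2) := mul_le_mul_of_nonneg_left hv2 hr0.le
  have hm3 : |u^2*v^2| ≤ r*(u^2+v^2) := by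
    rw [abs_mul, habs2u, habs2v]
    calc u^2 * v^2 ≤ u^2 * r := by nlinarith [sq_nonneg u, hvr2, hrr]
    _ = r * u^2 := mul_comm _ _
    _ ≤ r * (u^2+v^2) := mul_le_mul_of_nonneg_left hu2 hr0.le
  have hm4 : |u^3| ≤ r*(u^2+v^2) := by
    rw [show u^3 = u * u^2 by ring, abs_mul, habs2u]
    calc |u| * u^2 ≤ r * u^2 := mul_le_mul_of_nonneg_right hu (sq_nonneg u)
    _ ≤ r * (u^2+v^2) := mul_le_mul_of_nonneg_left hu2 hr0.le
  have hm5 : |u^4| ≤ r*(u^2+v^2) := by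
    rw [show u^4 = u^2 * u^2 by ring, abs_mul, habs2u]
    calc u^2 * u^2 ≤ u^2 * r := by nlinarith [sq_nonneg u, hur2, hrr]
    _ = r * u^2 := mul_comm _ _
    _ ≤ r * (u^2+v^2) := mul_le_mul_of_nonneg_left hu2 hr0.le
  have hm6 : |v^3| ≤ r*(u^2+v^2) := by
    rw [show v^3 = v * v^2 by ring, abs_mul, habs2v]
    calc |v| * v^2 ≤ r * v^2 := mul_le_mul_of_nonneg_right hv (sq_nonneg v)
    _ ≤ r * (u^2+v^2) := mul_le_mul_of_nonneg_left hv2 hr0.le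
  have hm7 : |v^4| ≤ r*(u^2+v^2) := by
    rw [show v^4 = v^2 * v^2 by ring, abs_mul, habs2v]
    calc v^2 * v^2 ≤ v^2 * r := by nlinarith [sq_nonneg v, hvr2, hrr]
    _ = r * v^2 := mul_comm _ _
    _ ≤ r * (u^2+v^2) := mul_le_mul_of_nonneg_left hv2 hr0.le
  obtain ⟨R, hRdef⟩ : ∃ R : ℝ, R = σ*(3*a20*(u^2*v) + 3*a21*ε*(u*v^2) + 2*a21*(u^2*v^2)
      + 3*A*ε*(u^3) + A*(u^4) + a02*(v^3) + a03*(v^4)) := ⟨_, rfl⟩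
  have hRbound : |R| ≤ C*(r*(u^2+v^2)) := by
    have h1 : |R| ≤ |3*a20*(u^2*v)| + |3*a21*ε*(u*v^2)| + |2*a21*(u^2*v^2)| + |3*A*ε*(u^3)|
        + |A*(u^4)| + |a02*(v^3)| + |a03*(v^4)| := by
      rw [hRdef, abs_mul, hσa, one_mul]
      calc |3*a20*(u^2*v) + 3*a21*ε*(u*v^2) + 2*a21*(u^2*v^2) + 3*A*ε*(u^3) + A*(u^4)
          + a02*(v^3) + a03*(v^4)|
          ≤ |3*a20*(u^2*v) + 3*a21*ε*(u*v^2) + 2*a21*(u^2*v^2) + 3*A*ε*(u^3) + A*(u^4)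
          + a02*(v^3)| + |a03*(v^4)| := abs_add_le _ _
        _ ≤ |3*a20*(u^2*v) + 3*a21*ε*(u*v^2) + 2*a21*(u^2*v^2) + 3*A*ε*(u^3) + A*(u^4)|
          + |a02*(v^3)| + |a03*(v^4)| := by gcongr ?_ + _; exact abs_add_le _ _
        _ ≤ |3*a20*(u^2*v) + 3*a21*ε*(u*v^2) + 2*a21*(u^2*v^2) + 3*A*ε*(u^3)|
          + |A*(u^4)| + |a02*(v^3)| + |a03*(v^4)| := by gcongr ?_ + _ + _; exact abs_add_le _ _
        _ ≤ |3*a20*(u^2*v) + 3*a21*ε*(u*v^2) + 2*a21*(u^2*v^2)|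
          + |3*A*ε*(u^3)| + |A*(u^4)| + |a02*(v^3)| + |a03*(v^4)| := by
            gcongr ?_ + _ + _ + _; exact abs_add_le _ _
        _ ≤ |3*a20*(u^2*v) + 3*a21*ε*(u*v^2)| + |2*a21*(u^2*v^2)|
          + |3*A*ε*(u^3)| + |A*(u^4)| + |a02*(v^3)| + |a03*(v^4)| := by
            gcongr ?_ + _ + _ + _ + _; exact abs_add_le _ _
        _ ≤ |3*a20*(u^2*v)| + |3*a21*ε*(u*v^2)| + |2*a21*(u^2*v^2)|
          + |3*A*ε*(u^3)| + |A*(u^4)| + |a02*(v^3)| + |a03*(v^4)| := by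
            gcongr ?_ + _ + _ + _ + _ + _; exact abs_add_le _ _
    have e1 : |3*a20*(u^2*v)| = 3*|a20| * |u^2*v| := by
      rw [abs_mul, abs_mul]; norm_num
    have e2 : |3*a21*ε*(u*v^2)| = 3*|a21| * |u*v^2| := by
      rw [abs_mul, abs_mul, abs_mul, hεa]; norm_num
    have e3 : |2*a21*(u^2*v^2)| = 2*|a21| * |u^2*v^2| := by
      rw [abs_mul, abs_mul]; norm_num
    have e4 : |3*A*ε*(u^3)| = 3*|A| * |u^3| := by
      rw [abs_mul, abs_mul, abs_mul, hεa]; norm_num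
    have e5 : |A*(u^4)| = |A| * |u^4| := abs_mul _ _
    have e6 : |a02*(v^3)| = |a02| * |v^3| := abs_mul _ _
    have e7 : |a03*(v^4)| = |a03| * |v^4| := abs_mul _ _
    rw [e1, e2, e3, e4, e5, e6, e7] at h1
    calc |R| ≤ 3*|a20| * |u^2*v| + 3*|a21| * |u*v^2| + 2*|a21| * |u^2*v^2| + 3*|A| * |u^3|
        + |A| * |u^4| + |a02| * |v^3| + |a03| * |v^4| := h1
    _ ≤ 3*|a20| * (r*(u^2+v^2)) + 3*|a21| * (r*(u^2+v^2)) + 2*|a21| * (r*(u^2+v^2))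
        + 3*|A| * (r*(u^2+v^2)) + |A| * (r*(u^2+v^2)) + |a02| * (r*(u^2+v^2))
        + |a03| * (r*(u^2+v^2)) := by
      gcongr <;> first
        | exact hm1 | exact hm2 | exact hm3 | exact hm4 | exact hm5 | exact hm6 | exact hm7
    _ = C*(r*(u^2+v^2)) := by rw [hCdef]; ring
  obtain ⟨q, hqdef⟩ : ∃ q : ℝ,
      q = (2*(σ*A))*u^2 + 2*(2*σ*a20*ε)*(u*v) + (σ*(1+a01+a21))*v^2 := ⟨_, rfl⟩
  have hiden : Sm * q - dd*(u^2+v^2)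
      = ((2*(σ*A))*u + (2*σ*a20*ε)*v)^2 + ((2*σ*a20*ε)*u + (σ*(1+a01+a21))*v)^2 := by
    rw [hqdef, hSmdef]
    linear_combination (u^2+v^2) * hαδβ
  have hq : dd * (u^2+v^2) ≤ Sm * q := by
    linarith [sq_nonneg ((2*(σ*A))*u + (2*σ*a20*ε)*v),
      sq_nonneg ((2*σ*a20*ε)*u + (σ*(1+a01+a21))*v), hiden]
  have hE : (σ*(2*a20*(ε+u)*v + a21*(ε+u)*v^2 - A*((ε+u) - (ε+u)^3)))*u
      + (σ*((1+a01)*v + a21*(ε+u)^2*v + a20*((ε+u)^2-1) + a02*v^2 + a03*v^3))*v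
      = q + R := by
    rw [hqdef, hRdef]
    linear_combination (σ*(A*ε*u + a20*v + 3*A*u^2 + a21*v^2)) * hε2
  rw [hE]
  have hRge : -(C*(r*(u^2+v^2))) ≤ R := neg_le_of_abs_le hRbound
  have h3 : Sm * (C*(r*(u^2+v^2))) ≤ (dd/2) * (u^2+v^2) := by
    linarith [mul_le_mul_of_nonneg_right hrC hpos.le,
      mul_nonneg (mul_nonneg hSm.le hr0.le) hpos.le]
  have hfinal : 0 < Sm * (q + R) := by
    linarith [hq, h3, mul_le_mul_of_nonneg_left hRge hSm.le, mul_pos hdet' hpos]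
  rcases mul_pos_iff.1 hfinal with ⟨_, h⟩ | ⟨h, _⟩
  · exact h
  · linarith

lemma hamiltonian_fderiv (σ A a01 a20 a21 a02 a03 : ℝ) (w : ℝ × ℝ) :
    HasFDerivAt (fun q : ℝ × ℝ => σ * ((1+a01)/2 * q.2^2 + a21/2 * (q.1^2*q.2^2)
        + a20 * ((q.1^2-1)*q.2) + a02/3 * q.2^3 + a03/4 * q.2^4
        - A/2 * q.1^2 + A/4 * q.1^4))
      ((σ * (2*a20*w.1*w.2 + a21*w.1*w.2^2 - A*(w.1 - w.1^3)))
          • ContinuousLinearMap.fst ℝ ℝ ℝ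
        + (σ * ((1+a01)*w.2 + a21*w.1^2*w.2 + a20*(w.1^2-1) + a02*w.2^2 + a03*w.2^3))
          • ContinuousLinearMap.snd ℝ ℝ ℝ) w := by
  have hx2 : HasFDerivAt (fun q : ℝ × ℝ => q.1^2)
      ((2*w.1) • ContinuousLinearMap.fst ℝ ℝ ℝ) w := by
    have := (hasDerivAt_pow 2 w.1).comp_hasFDerivAt w
      (hasFDerivAt_fst (p := w) (𝕜 := ℝ) (E := ℝ) (F := ℝ))
    norm_num at this
    exact this
  have hx4 : HasFDerivAt (fun q : ℝ × ℝ => q.1^4)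
      ((4*w.1^3) • ContinuousLinearMap.fst ℝ ℝ ℝ) w := by
    have := (hasDerivAt_pow 4 w.1).comp_hasFDerivAt w
      (hasFDerivAt_fst (p := w) (𝕜 := ℝ) (E := ℝ) (F := ℝ))
    norm_num at this
    exact this
  have hy1 : HasFDerivAt (fun q : ℝ × ℝ => q.2)
      (ContinuousLinearMap.snd ℝ ℝ ℝ) w := hasFDerivAt_snd
  have hy2 : HasFDerivAt (fun q : ℝ × ℝ => q.2^2)
      ((2*w.2) • ContinuousLinearMap.snd ℝ ℝ ℝ) w := by
    have := (hasDerivAt_pow 2 w.2).comp_hasFDerivAt w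
      (hasFDerivAt_snd (p := w) (𝕜 := ℝ) (E := ℝ) (F := ℝ))
    norm_num at this
    exact this
  have hy3 : HasFDerivAt (fun q : ℝ × ℝ => q.2^3)
      ((3*w.2^2) • ContinuousLinearMap.snd ℝ ℝ ℝ) w := by
    have := (hasDerivAt_pow 3 w.2).comp_hasFDerivAt w
      (hasFDerivAt_snd (p := w) (𝕜 := ℝ) (E := ℝ) (F := ℝ))
    norm_num at this
    exact this
  have hy4 : HasFDerivAt (fun q : ℝ × ℝ => q.2^4)
      ((4*w.2^3) • ContinuousLinearMap.snd ℝ ℝ ℝ) w := by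
    have := (hasDerivAt_pow 4 w.2).comp_hasFDerivAt w
      (hasFDerivAt_snd (p := w) (𝕜 := ℝ) (E := ℝ) (F := ℝ))
    norm_num at this
    exact this
  have ht :=
    (((((((hy2.const_mul ((1+a01)/2)).add
      ((hx2.mul hy2).const_mul (a21/2))).add
      (((hx2.sub_const 1).mul hy1).const_mul a20)).add
      (hy3.const_mul (a02/3))).add
      (hy4.const_mul (a03/4))).sub
      (hx2.const_mul (A/2))).add
      (hx4.const_mul (A/4))).const_mul σ
  refine ht.congr_fderiv ?_
  apply ContinuousLinearMap.ext
  intro v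
  simp only [ContinuousLinearMap.add_apply, ContinuousLinearMap.smul_apply,
    ContinuousLinearMap.sub_apply, ContinuousLinearMap.coe_fst',
    ContinuousLinearMap.coe_snd', smul_eq_mul]
  ring

lemma center_abstract (X : ℝ × ℝ → ℝ × ℝ) (p : ℝ × ℝ)
    (h hx hy : ℝ × ℝ → ℝ) (r : ℝ)
    (hXp : X p = 0) (hXc : Continuous X)
    (hxc : Continuous hx) (hyc : Continuous hy)
    (hCD : ContDiff ℝ 1 h)
    (hH : ∀ w : ℝ × ℝ, HasFDerivAt h
      (hx w • ContinuousLinearMap.fst ℝ ℝ ℝ + hy w • ContinuousLinearMap.snd ℝ ℝ ℝ) w)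
    (hO : ∀ w : ℝ × ℝ, hx w * (X w).1 + hy w * (X w).2 = 0)
    (hN : ∀ w : ℝ × ℝ, X w = 0 → hx w = 0 ∧ hy w = 0)
    (hr : 0 < r)
    (hG : ∀ u v : ℝ, 0 < u^2 + v^2 → u^2 + v^2 ≤ r^2 →
      0 < hx (p.1+u, p.2+v) * u + hy (p.1+u, p.2+v) * v) :
    HasCenterAt X p := by
  have hhc : Continuous h := hCD.continuous
  -- derivative along straight lines
  have hline : ∀ a b s : ℝ, HasDerivAt (fun s' => h (p.1 + s' * a, p.2 + s' * b))
      (hx (p.1 + s*a, p.2 + s*b) * a + hy (p.1 + s*a, p.2 + s*b) * b) s := by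
    intro a b s
    have hl : HasDerivAt (fun s' => ((p.1 + s' * a, p.2 + s' * b) : ℝ × ℝ)) ((a, b) : ℝ × ℝ) s := by
      have h1 : HasDerivAt (fun s' : ℝ => p.1 + s' * a) a s := by
        simpa using ((hasDerivAt_id s).mul_const a).const_add p.1
      have h2 : HasDerivAt (fun s' : ℝ => p.2 + s' * b) b s := by
        simpa using ((hasDerivAt_id s).mul_const b).const_add p.2
      exact h1.prodMk h2
    have := (hH ((p.1 + s*a, p.2 + s*b) : ℝ × ℝ)).comp_hasDerivAt s hl
    exact this
  -- strict monotonicity along rays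
  have hmono : ∀ a b : ℝ, a^2 + b^2 = 1 →
      StrictMonoOn (fun s => h (p.1 + s * a, p.2 + s * b)) (Icc 0 r) := by
    intro a b hab
    apply strictMonoOn_of_deriv_pos (convex_Icc 0 r)
    · apply (hhc.comp ?_).continuousOn
      exact (continuous_const.add (continuous_id.mul continuous_const)).prodMk
        (continuous_const.add (continuous_id.mul continuous_const))
    · intro s hs
      rw [interior_Icc] at hs
      rw [(hline a b s).deriv]
      have hkey : (s*a)^2 + (s*b)^2 = s^2 := by linear_combination s^2 * hab
      have h1 : 0 < (s*a)^2 + (s*b)^2 := by rw [hkey]; exact pow_pos hs.1 2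
      have h2 : (s*a)^2 + (s*b)^2 ≤ r^2 := by rw [hkey]; nlinarith [hs.1, hs.2]
      have h3 := hG (s*a) (s*b) h1 h2
      rw [show hx (p.1+s*a, p.2+s*b) * (s*a) + hy (p.1+s*a, p.2+s*b) * (s*b)
        = s * (hx (p.1+s*a, p.2+s*b) * a + hy (p.1+s*a, p.2+s*b) * b) by ring] at h3
      by_contra hK
      push_neg at hK
      nlinarith [hs.1]
  -- minimum of h on the euclidean sphere of radius r
  set S : Set (ℝ × ℝ) := {w | (w.1-p.1)^2 + (w.2-p.2)^2 = r^2} with hSdef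
  have hSclosed : IsClosed S := isClosed_eq (by fun_prop) continuous_const
  have hSsub : S ⊆ Metric.closedBall p r := by
    intro w hw
    simp only [hSdef, mem_setOf_eq] at hw
    rw [Metric.mem_closedBall, Prod.dist_eq, sup_le_iff]
    constructor <;> rw [Real.dist_eq, abs_le] <;> constructor <;> nlinarith [sq_nonneg (w.1-p.1), sq_nonneg (w.2-p.2)]
  have hScompact : IsCompact S :=
    (isCompact_closedBall p r).of_isClosed_subset hSclosed hSsub
  have hSne : S.Nonempty := by
    refine ⟨(p.1 + r, p.2), ?_⟩
    simp [hSdef]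
  obtain ⟨w₀, hw₀S, hw₀min'⟩ := hScompact.exists_isMinOn hSne hhc.continuousOn
  have hw₀min : ∀ w ∈ S, h w₀ ≤ h w := fun w hw => hw₀min' hw
  set c₁ : ℝ := h w₀ with hc₁def
  -- h p < c₁
  have hpc₁ : h p < c₁ := by
    set a := (w₀.1 - p.1) / r
    set b := (w₀.2 - p.2) / r
    have hw₀ : (w₀.1-p.1)^2 + (w₀.2-p.2)^2 = r^2 := hw₀S
    have hab : a^2 + b^2 = 1 := by
      simp only [a, b]
      field_simp
      linarith [hw₀]
    have h0 : (fun s => h (p.1 + s * a, p.2 + s * b)) 0 < (fun s => h (p.1 + s * a, p.2 + s * b)) r :=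
      hmono a b hab (left_mem_Icc.2 hr.le) (right_mem_Icc.2 hr.le) hr
    simp only [zero_mul, add_zero] at h0
    have hra : p.1 + r * a = w₀.1 := by simp only [a]; field_simp; ring
    have hrb : p.2 + r * b = w₀.2 := by simp only [b]; field_simp; ring
    rw [hra, hrb] at h0
    simpa [hc₁def] using h0
  -- choose ε
  have hev : ∀ᶠ z in nhds p, h z < c₁ := hhc.continuousAt.eventually_lt_const hpc₁
  obtain ⟨ε₀, hε₀pos, hε₀⟩ := Metric.eventually_nhds_iff.1 hev
  set ε : ℝ := min ε₀ (r/2) with hεdef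
  have hεpos : 0 < ε := lt_min hε₀pos (by linarith)
  refine ⟨hXp, ε, hεpos, ?_⟩
  intro z hzp hznear
  -- set up polar data of z
  set u1 : ℝ := z.1 - p.1 with hu1def
  set u2 : ℝ := z.2 - p.2 with hu2def
  have hu : u1 ≠ 0 ∨ u2 ≠ 0 := by
    by_contra hc; push_neg at hc
    exact hzp (Prod.ext (by linarith [hc.1]) (by linarith [hc.2]))
  have hs0sq : 0 < u1^2 + u2^2 := by
    rcases hu with h' | h' <;> positivity
  set s₀ : ℝ := Real.sqrt (u1^2 + u2^2) with hs₀def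
  have hs₀pos : 0 < s₀ := Real.sqrt_pos.2 hs0sq
  have hs₀sq : s₀^2 = u1^2 + u2^2 := Real.sq_sqrt hs0sq.le
  have hu1' : |u1| < ε := by
    have h1 : ‖(z - p).1‖ ≤ ‖z - p‖ := norm_fst_le (z - p)
    simp only [Prod.fst_sub] at h1
    calc |u1| = ‖z.1 - p.1‖ := rfl
    _ ≤ ‖z - p‖ := h1
    _ < ε := hznear
  have hu2' : |u2| < ε := by
    have h1 : ‖(z - p).2‖ ≤ ‖z - p‖ := norm_snd_le (z - p)
    simp only [Prod.snd_sub] at h1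
    calc |u2| = ‖z.2 - p.2‖ := rfl
    _ ≤ ‖z - p‖ := h1
    _ < ε := hznear
  have hεr : ε ≤ r / 2 := min_le_right _ _
  have hs₀r : s₀ < r := by
    have h1 : u1^2 < ε^2 := by nlinarith [abs_nonneg u1, sq_abs u1]
    have h2 : u2^2 < ε^2 := by nlinarith [abs_nonneg u2, sq_abs u2]
    have : s₀^2 < r^2 := by nlinarith
    nlinarith [hs₀pos]
  set a₀ : ℝ := u1 / s₀ with ha₀def
  set b₀ : ℝ := u2 / s₀ with hb₀def
  have hab₀ : a₀^2 + b₀^2 = 1 := by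
    simp only [ha₀def, hb₀def]
    field_simp
    linarith [hs₀sq]
  set θ₀ : ℝ := Complex.arg ⟨a₀, b₀⟩ with hθ₀def
  have habne : (⟨a₀, b₀⟩ : ℂ) ≠ 0 := by
    intro hc
    rw [Complex.ext_iff] at hc
    simp only [Complex.zero_re, Complex.zero_im] at hc
    rw [hc.1, hc.2] at hab₀; norm_num at hab₀
  have habs : ‖(⟨a₀, b₀⟩ : ℂ)‖ = 1 := by
    rw [Complex.norm_def, Complex.normSq_apply]
    simp only
    rw [show a₀ * a₀ + b₀ * b₀ = 1 by nlinarith [hab₀], Real.sqrt_one]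
  have hcθ : Real.cos θ₀ = a₀ := by
    rw [hθ₀def, Complex.cos_arg habne, habs]; simp
  have hsθ : Real.sin θ₀ = b₀ := by
    rw [hθ₀def, Complex.sin_arg, habs]; simp
  have hzcoord : (p.1 + s₀ * a₀, p.2 + s₀ * b₀) = z := by
    have e1 : s₀ * a₀ = u1 := by simp only [ha₀def]; field_simp
    have e2 : s₀ * b₀ = u2 := by simp only [hb₀def]; field_simp
    rw [e1, e2]
    exact Prod.ext (by simp [hu1def]) (by simp [hu2def])
  set c : ℝ := h z with hcdef
  have hc₀c : h p < c := by
    have h0 := hmono a₀ b₀ hab₀ (left_mem_Icc.2 hr.le) ⟨hs₀pos.le, hs₀r.le⟩ hs₀pos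
    simp only [zero_mul, add_zero] at h0
    rw [hzcoord] at h0
    simpa [hcdef] using h0
  have hcc₁ : c < c₁ := by
    apply hε₀
    calc dist z p = ‖z - p‖ := dist_eq_norm z p
    _ < ε := hznear
    _ ≤ ε₀ := min_le_left _ _
  -- the level-set radius function ρ
  set g : ℝ → ℝ → ℝ := fun θ s => h (p.1 + s * Real.cos θ, p.2 + s * Real.sin θ) with hgdef
  have habθ : ∀ θ : ℝ, (Real.cos θ)^2 + (Real.sin θ)^2 = 1 := fun θ => by
    rw [add_comm]; exact Real.sin_sq_add_cos_sq θ
  have hgmono : ∀ θ, StrictMonoOn (g θ) (Icc 0 r) := fun θ => hmono _ _ (habθ θ)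
  have hgcont : ∀ θ, ContinuousOn (g θ) (Icc 0 r) := by
    intro θ
    apply (hhc.comp ?_).continuousOn
    fun_prop
  have hgr : ∀ θ, c < g θ r := by
    intro θ
    have hmem : ((p.1 + r * Real.cos θ, p.2 + r * Real.sin θ) : ℝ × ℝ) ∈ S := by
      simp only [hSdef, mem_setOf_eq]
      have := habθ θ
      ring_nf
      nlinarith [habθ θ]
    calc c < c₁ := hcc₁
    _ ≤ g θ r := hw₀min _ hmem
  have hex : ∀ θ, ∃ s, s ∈ Ioo 0 r ∧ g θ s = c := by
    intro θ
    have hsub := intermediate_value_Ioo hr.le (hgcont θ)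
    have hmem : c ∈ Ioo (g θ 0) (g θ r) := by
      constructor
      · simpa [hgdef] using hc₀c
      · exact hgr θ
    obtain ⟨s, hs, hgs⟩ := hsub hmem
    exact ⟨s, hs, hgs⟩
  obtain ⟨ρ, hρspec, hρuniq⟩ : ∃ ρ : ℝ → ℝ, (∀ θ, ρ θ ∈ Ioo 0 r ∧ g θ (ρ θ) = c) ∧
      (∀ θ s, s ∈ Icc 0 r → g θ s = c → s = ρ θ) := by
    refine ⟨fun θ => Classical.choose (hex θ), fun θ => Classical.choose_spec (hex θ), ?_⟩
    intro θ s hs hgs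
    exact (hgmono θ).injOn hs (Ioo_subset_Icc_self (Classical.choose_spec (hex θ)).1)
      (hgs.trans (Classical.choose_spec (hex θ)).2.symm)
  have hρθ₀ : ρ θ₀ = s₀ := by
    refine (hρuniq θ₀ s₀ ⟨hs₀pos.le, hs₀r.le⟩ ?_).symm
    rw [hgdef]
    simp only [hcθ, hsθ]
    rw [hzcoord]
  have hρper : ∀ θ, ρ (θ + 2*π) = ρ θ := by
    intro θ
    refine (hρuniq (θ + 2*π) (ρ θ) (Ioo_subset_Icc_self (hρspec θ).1) ?_).symm
    rw [hgdef]
    simp only [Real.cos_add_two_pi, Real.sin_add_two_pi]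
    exact (hρspec θ).2
  have hρspec' : ∀ θ, ρ θ ∈ Ioo 0 r ∧
      h (p.1 + ρ θ * Real.cos θ, p.2 + ρ θ * Real.sin θ) = c := by
    intro θ
    refine ⟨(hρspec θ).1, ?_⟩
    have := (hρspec θ).2
    rw [hgdef] at this
    exact this
  have hρuniq' : ∀ θ s, s ∈ Icc 0 r →
      h (p.1 + s * Real.cos θ, p.2 + s * Real.sin θ) = c → s = ρ θ := by
    intro θ s hs hh
    refine hρuniq θ s hs ?_
    rw [hgdef]
    exact hh
  -- positivity of the radial derivative on the level curve
  have hgspos : ∀ θ, 0 < hx (p.1 + ρ θ * Real.cos θ, p.2 + ρ θ * Real.sin θ) * Real.cos θ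
      + hy (p.1 + ρ θ * Real.cos θ, p.2 + ρ θ * Real.sin θ) * Real.sin θ := by
    intro θ
    have hs₁ := (hρspec θ).1
    have hsq : (ρ θ * Real.cos θ)^2 + (ρ θ * Real.sin θ)^2 = (ρ θ)^2 := by
      linear_combination (ρ θ)^2 * habθ θ
    have h1 : 0 < (ρ θ * Real.cos θ)^2 + (ρ θ * Real.sin θ)^2 := by
      rw [hsq]; exact pow_pos hs₁.1 2
    have h2 : (ρ θ * Real.cos θ)^2 + (ρ θ * Real.sin θ)^2 ≤ r^2 := by
      rw [hsq]; nlinarith [hs₁.1, hs₁.2]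
    have h3 := hG (ρ θ * Real.cos θ) (ρ θ * Real.sin θ) h1 h2
    rw [show hx (p.1 + ρ θ * Real.cos θ, p.2 + ρ θ * Real.sin θ) * (ρ θ * Real.cos θ)
        + hy (p.1 + ρ θ * Real.cos θ, p.2 + ρ θ * Real.sin θ) * (ρ θ * Real.sin θ)
        = ρ θ * (hx (p.1 + ρ θ * Real.cos θ, p.2 + ρ θ * Real.sin θ) * Real.cos θ
        + hy (p.1 + ρ θ * Real.cos θ, p.2 + ρ θ * Real.sin θ) * Real.sin θ) by ring] at h3
    by_contra hK
    push_neg at hK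
    nlinarith [hs₁.1]
  have hkey : ∀ θ, ∃ d, HasDerivAt ρ d θ := fun θ =>
    rho_hasDeriv h hx hy p r c ρ hCD hH hρspec' hρuniq' θ (hgspos θ)
  have hρcont : Continuous ρ := continuous_iff_continuousAt.2 fun θ =>
    (hkey θ).choose_spec.continuousAt
  -- the level curve
  set C : ℝ → ℝ × ℝ := fun θ => (p.1 + ρ θ * Real.cos θ, p.2 + ρ θ * Real.sin θ)
    with hCdef
  have hCcont : Continuous C :=
    (continuous_const.add (hρcont.mul Real.continuous_cos)).prodMk
      (continuous_const.add (hρcont.mul Real.continuous_sin))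
  have hCz : C θ₀ = z := by
    rw [hCdef]
    simp only [hρθ₀, hcθ, hsθ]
    exact hzcoord
  have hCper : ∀ θ, C (θ + 2*π) = C θ := by
    intro θ
    rw [hCdef]
    simp only [hρper θ, Real.cos_add_two_pi, Real.sin_add_two_pi]
  -- the angular speed
  set lam : ℝ → ℝ :=
    fun θ => (-(Real.sin θ) * (X (C θ)).1 + Real.cos θ * (X (C θ)).2) / ρ θ with hlamdef
  -- pointwise tangent data
  have htan : ∀ θ, ∃ b : ℝ × ℝ, HasDerivAt C b θ ∧ X (C θ) = lam θ • b := by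
    intro θ
    obtain ⟨d, hd⟩ := hkey θ
    have hC1 : HasDerivAt (fun θ' => p.1 + ρ θ' * Real.cos θ')
        (d * Real.cos θ - ρ θ * Real.sin θ) θ := by
      have := (hd.mul (Real.hasDerivAt_cos θ)).const_add p.1
      exact this.congr_deriv (by ring)
    have hC2 : HasDerivAt (fun θ' => p.2 + ρ θ' * Real.sin θ')
        (d * Real.sin θ + ρ θ * Real.cos θ) θ := by
      exact (hd.mul (Real.hasDerivAt_sin θ)).const_add p.2
    have hCd : HasDerivAt C
        ((d * Real.cos θ - ρ θ * Real.sin θ, d * Real.sin θ + ρ θ * Real.cos θ) : ℝ × ℝ) θ :=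
      hC1.prodMk hC2
    -- tangency
    have hconst : (fun θ' => h (C θ')) = fun _ => c := by
      funext θ'
      exact (hρspec' θ').2
    have hhaC : HasDerivAt (fun θ' => h (C θ'))
        (hx (C θ) * (d * Real.cos θ - ρ θ * Real.sin θ)
          + hy (C θ) * (d * Real.sin θ + ρ θ * Real.cos θ)) θ := by
      have := (hH (C θ)).comp_hasDerivAt θ hCd
      exact this
    have h0 : hx (C θ) * (d * Real.cos θ - ρ θ * Real.sin θ)
        + hy (C θ) * (d * Real.sin θ + ρ θ * Real.cos θ) = 0 := by
      rw [hconst] at hhaC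
      exact hhaC.unique (hasDerivAt_const θ c)
    have hnne : ((hx (C θ), hy (C θ)) : ℝ × ℝ) ≠ 0 := by
      intro hzero
      rw [Prod.ext_iff] at hzero
      simp only [Prod.fst_zero, Prod.snd_zero] at hzero
      have := hgspos θ
      rw [show hx (p.1 + ρ θ * Real.cos θ, p.2 + ρ θ * Real.sin θ) = hx (C θ) from rfl,
        show hy (p.1 + ρ θ * Real.cos θ, p.2 + ρ θ * Real.sin θ) = hy (C θ) from rfl,
        hzero.1, hzero.2] at this
      norm_num at this
    have hbne : ((d * Real.cos θ - ρ θ * Real.sin θ, d * Real.sin θ + ρ θ * Real.cos θ) : ℝ × ℝ)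
        ≠ 0 := by
      intro hzero
      rw [Prod.ext_iff] at hzero
      simp only [Prod.fst_zero, Prod.snd_zero] at hzero
      have hsum : (d * Real.cos θ - ρ θ * Real.sin θ)^2
          + (d * Real.sin θ + ρ θ * Real.cos θ)^2 = d^2 + (ρ θ)^2 := by
        linear_combination (d^2 + (ρ θ)^2) * habθ θ
      rw [hzero.1, hzero.2] at hsum
      have := (hρspec θ).1.1
      nlinarith [sq_nonneg d]
    obtain ⟨μ, hμ⟩ := planar_parallel hnne (hO (C θ)) h0 hbne
    refine ⟨_, hCd, ?_⟩
    have hlamθ : lam θ = μ := by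
      rw [hlamdef]
      simp only
      rw [hμ]
      simp only [Prod.smul_fst, Prod.smul_snd, smul_eq_mul]
      rw [show -Real.sin θ * (μ * (d * Real.cos θ - ρ θ * Real.sin θ))
          + Real.cos θ * (μ * (d * Real.sin θ + ρ θ * Real.cos θ)) = μ * ρ θ by
        linear_combination μ * ρ θ * habθ θ]
      rw [mul_div_assoc, div_self (hρspec θ).1.1.ne', mul_one]
    rw [hlamθ]
    exact hμ
  have hρpos : ∀ θ, 0 < ρ θ := fun θ => (hρspec θ).1.1
  have hXCcont : Continuous fun θ => X (C θ) := hXc.comp hCcont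
  have hlamcont : Continuous lam := by
    rw [hlamdef]
    apply Continuous.div
    · exact ((Real.continuous_sin.neg).mul (continuous_fst.comp hXCcont)).add
        (Real.continuous_cos.mul (continuous_snd.comp hXCcont))
    · exact hρcont
    · exact fun θ => (hρpos θ).ne'
  have hlamne : ∀ θ, lam θ ≠ 0 := by
    intro θ h0
    obtain ⟨b, hbd, hXb⟩ := htan θ
    rw [h0, zero_smul] at hXb
    obtain ⟨hx0, hy0⟩ := hN (C θ) hXb
    have hpos := hgspos θ
    rw [show ((p.1 + ρ θ * Real.cos θ, p.2 + ρ θ * Real.sin θ) : ℝ × ℝ) = C θ from rfl,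
      hx0, hy0] at hpos
    norm_num at hpos
  have hlamper : ∀ θ, lam (θ + 2*π) = lam θ := by
    intro θ
    rw [hlamdef]
    simp only [hCper θ, hρper θ, Real.cos_add_two_pi, Real.sin_add_two_pi]
  have hsign : ∃ σ : ℝ, (σ = 1 ∨ σ = -1) ∧ ∀ θ, 0 < σ * lam θ := by
    rcases lt_or_gt_of_ne (hlamne 0) with hneg | hpos
    · refine ⟨-1, Or.inr rfl, ?_⟩
      intro θ
      rcases lt_or_gt_of_ne (hlamne θ) with hθ | hθ
      · nlinarith
      · exfalso
        have hcont : ContinuousOn lam (uIcc 0 θ) := hlamcont.continuousOn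
        have h0mem : (0:ℝ) ∈ uIcc (lam 0) (lam θ) := by
          rw [Set.mem_uIcc]; left; exact ⟨hneg.le, hθ.le⟩
        obtain ⟨θ', _, hθ'⟩ := intermediate_value_uIcc hcont h0mem
        exact hlamne θ' hθ'
    · refine ⟨1, Or.inl rfl, ?_⟩
      intro θ
      rcases lt_or_gt_of_ne (hlamne θ) with hθ | hθ
      · exfalso
        have hcont : ContinuousOn lam (uIcc 0 θ) := hlamcont.continuousOn
        have h0mem : (0:ℝ) ∈ uIcc (lam 0) (lam θ) := by
          rw [Set.mem_uIcc]; right; exact ⟨hθ.le, hpos.le⟩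
        obtain ⟨θ', _, hθ'⟩ := intermediate_value_uIcc hcont h0mem
        exact hlamne θ' hθ'
      · nlinarith
  obtain ⟨σ, hσ, hσpos⟩ := hsign
  have hσsq : σ * σ = 1 := by rcases hσ with h | h <;> rw [h] <;> norm_num
  set D : ℝ → ℝ × ℝ := fun θ => C (θ₀ + σ * θ) with hDdef
  set Λ : ℝ → ℝ := fun θ => σ * lam (θ₀ + σ * θ) with hΛdef
  have hΛc : Continuous Λ := by
    rw [hΛdef]
    exact continuous_const.mul (hlamcont.comp (continuous_const.add
      (continuous_const.mul continuous_id)))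
  have hΛpos : ∀ θ, 0 < Λ θ := fun θ => hσpos _
  have hlamper' : ∀ x, lam (x + σ * (2*π)) = lam x := by
    intro x
    rcases hσ with h | h
    · rw [h]; simpa using hlamper x
    · rw [h]
      have := hlamper (x + (-1) * (2*π))
      rw [show x + (-1) * (2*π) + 2*π = x by ring] at this
      exact this.symm
  have hCper' : ∀ x, C (x + σ * (2*π)) = C x := by
    intro x
    rcases hσ with h | h
    · rw [h]; simpa using hCper x
    · rw [h]
      have := hCper (x + (-1) * (2*π))
      rw [show x + (-1) * (2*π) + 2*π = x by ring] at this
      exact this.symm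
  have hΛper : ∀ θ, Λ (θ + 2*π) = Λ θ := by
    intro θ
    rw [hΛdef]
    simp only
    rw [show θ₀ + σ * (θ + 2*π) = (θ₀ + σ * θ) + σ * (2*π) by ring, hlamper']
  have hDper : ∀ θ, D (θ + 2*π) = D θ := by
    intro θ
    rw [hDdef]
    simp only
    rw [show θ₀ + σ * (θ + 2*π) = (θ₀ + σ * θ) + σ * (2*π) by ring, hCper']
  have hDtan : ∀ θ, ∃ b : ℝ × ℝ, HasDerivAt D b θ ∧ X (D θ) = Λ θ • b := by
    intro θ
    obtain ⟨b, hbd, hXb⟩ := htan (θ₀ + σ * θ)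
    refine ⟨σ • b, ?_, ?_⟩
    · have haff : HasDerivAt (fun θ' : ℝ => θ₀ + σ * θ') σ θ := by
        simpa using ((hasDerivAt_id θ).const_mul σ).const_add θ₀
      have := HasDerivAt.scomp θ hbd haff
      rw [hDdef]
      exact this
    · rw [hDdef]
      simp only
      rw [hXb, hΛdef, smul_smul]
      congr 1
      rw [show σ * lam (θ₀ + σ * θ) * σ = (σ * σ) * lam (θ₀ + σ * θ) by ring, hσsq, one_mul]
  obtain ⟨γ, T, hT, hγ0, hγd, hγT, hγsurj⟩ :=
    reparam_periodic X D Λ hΛc hΛpos hΛper hDper hDtan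
  have hD0 : D 0 = z := by
    rw [hDdef]
    simp only [mul_zero, add_zero]
    exact hCz
  refine ⟨γ, T, hT, by rw [hγ0, hD0], hγd, by rw [hγT, hD0], ?_⟩
  obtain ⟨t₂, ht₂⟩ := hγsurj (σ * π)
  refine ⟨0, t₂, ?_⟩
  rw [hγ0, hD0, ht₂, hDdef]
  simp only
  rw [show θ₀ + σ * (σ * π) = θ₀ + π by rw [← mul_assoc, hσsq, one_mul]]
  intro heq
  have hρ' := hρpos (θ₀ + π)
  have hCval : C (θ₀ + π) = ((p.1 - ρ (θ₀ + π) * a₀, p.2 - ρ (θ₀ + π) * b₀) : ℝ × ℝ) := by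
    rw [hCdef]
    refine Prod.ext ?_ ?_ <;>
      simp only [Real.cos_add, Real.sin_add, Real.cos_pi, Real.sin_pi, hcθ, hsθ] <;> ring
  rw [← hzcoord, hCval, Prod.ext_iff] at heq
  simp only at heq
  obtain ⟨e1, e2⟩ := heq
  have ha0 : a₀ = 0 := by
    have hmul : (s₀ + ρ (θ₀ + π)) * a₀ = 0 := by linear_combination e1
    rcases mul_eq_zero.1 hmul with h' | h'
    · exact ((add_pos hs₀pos hρ').ne' h').elim
    · exact h'
  have hb0 : b₀ = 0 := by
    have hmul : (s₀ + ρ (θ₀ + π)) * b₀ = 0 := by linear_combination e2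
    rcases mul_eq_zero.1 hmul with h' | h'
    · exact ((add_pos hs₀pos hρ').ne' h').elim
    · exact h'
  rw [ha0, hb0] at hab₀
  norm_num at hab₀

lemma center_instance (a20 a21 a01 a02 a03 b30 b11 b12 ε : ℝ)
    (hεc : ε = 1 ∨ ε = -1) (hb : b30 ≠ 1)
    (hd : 2*a20*b11 + 2*(1-b30)*(1+a01+a21) > 0)
    (h1 : 2*a20 + b11 = 0) (h2 : a21 + b12 = 0) :
    HasCenterAt (fun p : ℝ × ℝ =>
        (p.2 + a20*(p.1^2-1) + a21*p.1^2*p.2 + a01*p.2 + a02*p.2^2 + a03*p.2^3,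
         p.1 - p.1^3 + b30*(p.1^3-p.1) + b11*p.1*p.2 + b12*p.1*p.2^2)) (ε, 0) := by
  have hb11 : b11 = -(2*a20) := by linarith
  have hb12 : b12 = -a21 := by linarith
  have hAne : (1:ℝ) - b30 ≠ 0 := sub_ne_zero.2 (Ne.symm hb)
  obtain ⟨σ, hσc, hσA⟩ : ∃ σ : ℝ, (σ = 1 ∨ σ = -1) ∧ 0 < σ * (1-b30) := by
    rcases lt_or_gt_of_ne hAne with hA | hA
    · exact ⟨-1, Or.inr rfl, by nlinarith [hA]⟩
    · exact ⟨1, Or.inl rfl, by nlinarith [hA]⟩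
  have hdet : 0 < 2*(1-b30)*(1+a01+a21) - 4*a20^2 := by
    have hd' := hd
    rw [hb11] at hd'
    nlinarith [hd']
  have hσB : 0 < σ * (1+a01+a21) := by
    rcases hσc with rfl | rfl
    · nlinarith [hσA, hdet, sq_nonneg a20]
    · nlinarith [hσA, hdet, sq_nonneg a20]
  obtain ⟨r, hr0, hG⟩ := hG_estimate σ ε (1-b30) a01 a20 a21 a02 a03 hσc hεc hσA hσB hdet
  refine center_abstract _ (ε, 0)
    (fun q : ℝ × ℝ => σ * ((1+a01)/2 * q.2^2 + a21/2 * (q.1^2*q.2^2)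
        + a20 * ((q.1^2-1)*q.2) + a02/3 * q.2^3 + a03/4 * q.2^4
        - (1-b30)/2 * q.1^2 + (1-b30)/4 * q.1^4))
    (fun w : ℝ × ℝ => σ * (2*a20*w.1*w.2 + a21*w.1*w.2^2 - (1-b30)*(w.1 - w.1^3)))
    (fun w : ℝ × ℝ => σ * ((1+a01)*w.2 + a21*w.1^2*w.2 + a20*(w.1^2-1)
        + a02*w.2^2 + a03*w.2^3))
    r ?_ ?_ ?_ ?_ ?_ ?_ ?_ ?_ hr0 ?_
  · rcases hεc with rfl | rfl <;> refine Prod.ext ?_ ?_ <;> norm_num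
  · fun_prop
  · fun_prop
  · fun_prop
  · fun_prop
  · exact fun w => hamiltonian_fderiv σ (1-b30) a01 a20 a21 a02 a03 w
  · intro w
    simp only
    rw [hb11, hb12]
    ring
  · intro w hw
    have e1 := congrArg Prod.fst hw
    have e2 := congrArg Prod.snd hw
    simp only [Prod.fst_zero, Prod.snd_zero] at e1 e2
    rw [hb11, hb12] at e2
    constructor
    · linear_combination (-σ) * e2
    · linear_combination σ * e1
  · intro u v hh1 hh2
    have := hG u v hh1 hh2
    simpa using this

/-- Hamiltonian case: if `b30 ≠ 1`, the linearization at `(1,0)` has positive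
determinant, `2 a20 + b11 = 0` and `a21 + b12 = 0`, then the reversible cubic vector
field `X` has a center at `(1,0)` and a center at `(-1,0)`. -/
theorem reversible_cubic_center_Hamiltonian (a20 a21 a01 a02 a03 b30 b11 b12 : ℝ)
    (hb : b30 ≠ 1)
    (hd : 2*a20*b11 + 2*(1-b30)*(1+a01+a21) > 0)
    (h1 : 2*a20 + b11 = 0) (h2 : a21 + b12 = 0) :
    HasCenterAt (fun p : ℝ × ℝ =>
        (p.2 + a20*(p.1^2-1) + a21*p.1^2*p.2 + a01*p.2 + a02*p.2^2 + a03*p.2^3,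
         p.1 - p.1^3 + b30*(p.1^3-p.1) + b11*p.1*p.2 + b12*p.1*p.2^2)) (1, 0) ∧
    HasCenterAt (fun p : ℝ × ℝ =>
        (p.2 + a20*(p.1^2-1) + a21*p.1^2*p.2 + a01*p.2 + a02*p.2^2 + a03*p.2^3,
         p.1 - p.1^3 + b30*(p.1^3-p.1) + b11*p.1*p.2 + b12*p.1*p.2^2)) (-1, 0) :=
  ⟨center_instance a20 a21 a01 a02 a03 b30 b11 b12 1 (Or.inl rfl) hb hd h1 h2,
   center_instance a20 a21 a01 a02 a03 b30 b11 b12 (-1) (Or.inr rfl) hb hd h1 h2⟩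
end
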